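/- arXiv:1006.3164 — 2 statements merged into one kernel-verified Lean document; each statement's English description precedes it below -/
import Mathlib

section
/- Let ψ ∈ 𝒦₁ with index α < 1 and θ(x) = x/ψ(x). A positive measurable g is a ψ-l.c.f. if and only if g(x) = c(x)·exp(∫₁^{e^{θ(x)}} ε(t)/t dt) for x ≥ 1, with c(t) → c ∈ (0,∞) and ε(t) → 0. -/
open Filter Real Asymptotics MeasureTheory
open scoped Topology ENNReal

namespace Scratch

lemma psi_div_tendsto {ψ : ℝ → ℝ} (hψ_one : ∀ x, 1 ≤ ψ x)
    (hθ_top : Tendsto (fun x => x / ψ x) atTop atTop) :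
    Tendsto (fun x => ψ x / x) atTop (𝓝 0) := by
  have h := hθ_top.inv_tendsto_atTop
  refine h.congr' ?_
  filter_upwards [eventually_gt_atTop 0] with x hx
  simp [Pi.inv_apply, inv_div]

lemma theta_shift {ψ : ℝ → ℝ} {α : ℝ} (hψ_one : ∀ x, 1 ≤ ψ x)
    (hθ_top : Tendsto (fun x => x / ψ x) atTop atTop)
    (hψ_smooth : ∀ v : ℝ,
      (fun x => ψ (x + v * ψ x) - ψ x - α * v * (ψ x) ^ 2 / x)
        =o[atTop] (fun x => (ψ x) ^ 2 / x)) (v : ℝ) :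
    Tendsto (fun x => ψ (x + v * ψ x) / ψ x) atTop (𝓝 1) ∧
    Tendsto (fun x => (x + v * ψ x) / ψ (x + v * ψ x) - x / ψ x) atTop
      (𝓝 ((1 - α) * v)) := by
  have hψpos : ∀ x, (0:ℝ) < ψ x := fun x => lt_of_lt_of_le one_pos (hψ_one x)
  set r : ℝ → ℝ := fun x =>
    (ψ (x + v * ψ x) - ψ x - α * v * (ψ x) ^ 2 / x) / ((ψ x) ^ 2 / x) with hr_def
  have hr : Tendsto r atTop (𝓝 0) := (hψ_smooth v).tendsto_div_nhds_zero
  have hs : Tendsto (fun x => ψ x / x) atTop (𝓝 0) := psi_div_tendsto hψ_one hθ_top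
  -- ratio
  have hratio : Tendsto (fun x => ψ (x + v * ψ x) / ψ x) atTop (𝓝 1) := by
    have h1 : Tendsto (fun x => 1 + (α * v + r x) * (ψ x / x)) atTop (𝓝 (1 + (α * v + 0) * 0)) :=
      tendsto_const_nhds.add ((tendsto_const_nhds.add hr).mul hs)
    simp only [add_zero, mul_zero] at h1
    refine h1.congr' ?_
    filter_upwards [eventually_gt_atTop 0] with x hx
    have hψx := hψpos x
    have hx2 : (ψ x)^2 / x ≠ 0 := by positivity
    have hx0 : x ≠ 0 := ne_of_gt hx
    have hψ0 : ψ x ≠ 0 := ne_of_gt hψx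
    have hΨ0 : ψ (x + v * ψ x) ≠ 0 := ne_of_gt (hψpos _)
    have hrx0 : r x * ((ψ x)^2 / x) = ψ (x + v * ψ x) - ψ x - α * v * (ψ x) ^ 2 / x :=
      div_mul_cancel₀ _ hx2
    have hrx' : r x * (ψ x)^2 = (ψ (x + v * ψ x) - ψ x) * x - α * v * (ψ x)^2 := by
      have h := congrArg (fun z => z * x) hrx0
      try simp only at h
      field_simp at h
      rw [h, mul_comm (ψ x) v]; ring
    field_simp
    linear_combination hrx'
  refine ⟨hratio, ?_⟩
  have hΨpos : ∀ x, (0:ℝ) < ψ (x + v * ψ x) := fun x => hψpos _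
  have h2 : Tendsto (fun x => ((1 - α) * v - r x) * (ψ x / ψ (x + v * ψ x)))
      atTop (𝓝 (((1 - α) * v - 0) * 1)) := by
    refine (tendsto_const_nhds.sub hr).mul ?_
    have := hratio.inv₀ one_ne_zero
    simp only [inv_one] at this
    refine this.congr ?_
    intro x
    rw [inv_div]
  simp only [sub_zero, mul_one] at h2
  refine h2.congr' ?_
  filter_upwards [eventually_gt_atTop 0] with x hx
  have hψx := hψpos x
  have hΨx := hΨpos x
  have hx2 : (ψ x)^2 / x ≠ 0 := by positivity
  have hx0 : x ≠ 0 := ne_of_gt hx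
  have hψ0 : ψ x ≠ 0 := ne_of_gt hψx
  have hΨ0 : ψ (x + v * ψ x) ≠ 0 := ne_of_gt hΨx
  have hrx0 : r x * ((ψ x)^2 / x) = ψ (x + v * ψ x) - ψ x - α * v * (ψ x) ^ 2 / x :=
    div_mul_cancel₀ _ hx2
  have hrx' : r x * (ψ x)^2 = (ψ (x + v * ψ x) - ψ x) * x - α * v * (ψ x)^2 := by
    have h := congrArg (fun z => z * x) hrx0
    try simp only at h
    field_simp at h
    rw [h, mul_comm (ψ x) v]; ring
  rw [div_sub_div _ _ hΨ0 hψ0, mul_div_assoc', div_eq_div_iff hΨ0 (mul_ne_zero hΨ0 hψ0)]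
  linear_combination (-(ψ (x + v * ψ x))) * hrx'


lemma div_add_const_tendsto {C : ℝ} :
    Tendsto (fun t : ℝ => t / (t + C)) atTop (𝓝 1) := by
  have hC : Tendsto (fun t : ℝ => C / (t + C)) atTop (𝓝 0) :=
    Tendsto.div_atTop tendsto_const_nhds (tendsto_atTop_add_const_right _ C tendsto_id)
  have h : Tendsto (fun t : ℝ => 1 - C / (t + C)) atTop (𝓝 (1 - 0)) :=
    tendsto_const_nhds.sub hC
  rw [sub_zero] at h
  refine h.congr' ?_
  filter_upwards [eventually_gt_atTop (max 0 (-C) + 1)] with t ht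
  have h2 : t + C > 0 := by
    have := le_max_right 0 (-C); linarith [le_max_left 0 (-C)]
  field_simp; ring

theorem uct {ψ k : ℝ → ℝ} {α : ℝ} (hα : α < 1) (hψ_one : ∀ x, 1 ≤ ψ x)
    (hθ_mono : StrictMonoOn (fun x => x / ψ x) (Set.Ici 1))
    (hθ_top : Tendsto (fun x => x / ψ x) atTop atTop)
    (hψ_smooth : ∀ v : ℝ,
      (fun x => ψ (x + v * ψ x) - ψ x - α * v * (ψ x) ^ 2 / x)
        =o[atTop] (fun x => (ψ x) ^ 2 / x))
    (hk : Measurable k)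
    (hconv : ∀ v : ℝ, Tendsto (fun x => k (x + v * ψ x) - k x) atTop (𝓝 0))
    (V : ℝ) (hV : 0 ≤ V) {ε : ℝ} (hε : 0 < ε) :
    ∀ᶠ x in atTop, ∀ v ∈ Set.Icc (0:ℝ) V, |k (x + v * ψ x) - k x| ≤ ε := by
  have hψpos : ∀ x, (0:ℝ) < ψ x := fun x => lt_of_lt_of_le one_pos (hψ_one x)
  by_contra hcon
  rw [Filter.not_eventually] at hcon
  have hfreq := Filter.frequently_atTop.1 hcon
  have hchoice : ∀ n : ℕ, ∃ x : ℝ, (n:ℝ) ≤ x ∧ ∃ v, v ∈ Set.Icc (0:ℝ) V ∧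
      ε < |k (x + v * ψ x) - k x| := by
    intro n
    obtain ⟨b, hb, hbad⟩ := hfreq (n:ℝ)
    push_neg at hbad
    obtain ⟨v, hv, hv2⟩ := hbad
    exact ⟨b, hb, v, hv, hv2⟩
  choose xs hxs vs hvs hbad using hchoice
  have hxs_top : Tendsto xs atTop atTop :=
    tendsto_atTop_mono hxs tendsto_natCast_atTop_atTop
  set ys : ℕ → ℝ := fun n => xs n + vs n * ψ (xs n) with hys_def
  have hys_ge : ∀ n, xs n ≤ ys n := fun n =>
    le_add_of_nonneg_right (mul_nonneg (hvs n).1 (hψpos _).le)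
  have hys_top : Tendsto ys atTop atTop := tendsto_atTop_mono hys_ge hxs_top
  set θ : ℝ → ℝ := fun x => x / ψ x with hθ_def
  set ρ : ℕ → ℝ := fun n => ψ (ys n) / ψ (xs n) with hρ_def
  have hρpos : ∀ n, 0 < ρ n := fun n => div_pos (hψpos _) (hψpos _)
  -- ρ → 1
  have h_yx : Tendsto (fun n => ys n / xs n) atTop (𝓝 1) := by
    have hup : Tendsto (fun n => 1 + V * (ψ (xs n) / xs n)) atTop (𝓝 (1 + V * 0)) :=
      tendsto_const_nhds.add
        (tendsto_const_nhds.mul ((psi_div_tendsto hψ_one hθ_top).comp hxs_top))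
    rw [mul_zero, add_zero] at hup
    refine tendsto_of_tendsto_of_tendsto_of_le_of_le' tendsto_const_nhds hup ?_ ?_
    · filter_upwards [hxs_top.eventually_gt_atTop 0] with n hn
      exact (one_le_div hn).2 (hys_ge n)
    · filter_upwards [hxs_top.eventually_gt_atTop 0] with n hn
      have : ys n / xs n = 1 + vs n * (ψ (xs n) / xs n) := by
        field_simp [hys_def]; rfl
      rw [this]
      have : vs n * (ψ (xs n) / xs n) ≤ V * (ψ (xs n) / xs n) :=
        mul_le_mul_of_nonneg_right (hvs n).2 (div_nonneg (hψpos _).le hn.le)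
      linarith
  have hθsh := (theta_shift hψ_one hθ_top hψ_smooth V).2
  set C : ℝ := (1 - α) * V + 1 with hC_def
  have h_θxy : Tendsto (fun n => θ (xs n) / θ (ys n)) atTop (𝓝 1) := by
    have hev1 : ∀ᶠ n in atTop, θ (ys n) ≤ θ (xs n) + C := by
      have h1 : ∀ᶠ x in atTop, θ (x + V * ψ x) - θ x ≤ C := by
        refine hθsh.eventually (eventually_le_nhds ?_)
        rw [hC_def]; linarith
      filter_upwards [hxs_top.eventually h1, hxs_top.eventually_ge_atTop 1] with n h1n h1x
      have hmem1 : ys n ∈ Set.Ici (1:ℝ) := le_trans h1x (hys_ge n)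
      have hmem2 : xs n + V * ψ (xs n) ∈ Set.Ici (1:ℝ) :=
        le_trans h1x (le_add_of_nonneg_right (mul_nonneg hV (hψpos _).le))
      have hyle : ys n ≤ xs n + V * ψ (xs n) := by
        have := mul_le_mul_of_nonneg_right (hvs n).2 (hψpos (xs n)).le
        simp only [hys_def]; linarith
      have := hθ_mono.monotoneOn hmem1 hmem2 hyle
      simp only [hθ_def] at this h1n ⊢
      linarith
    have hev2 : ∀ᶠ n in atTop, θ (xs n) ≤ θ (ys n) := by
      filter_upwards [hxs_top.eventually_ge_atTop 1] with n h1x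
      exact hθ_mono.monotoneOn (Set.mem_Ici.2 h1x)
        (Set.mem_Ici.2 (le_trans h1x (hys_ge n))) (hys_ge n)
    have hev3 : ∀ᶠ n in atTop, 0 < θ (xs n) := (hθ_top.comp hxs_top).eventually_gt_atTop 0
    have hlow : Tendsto (fun n => θ (xs n) / (θ (xs n) + C)) atTop (𝓝 1) :=
      div_add_const_tendsto.comp (hθ_top.comp hxs_top)
    refine tendsto_of_tendsto_of_tendsto_of_le_of_le' hlow tendsto_const_nhds ?_ ?_
    · filter_upwards [hev1, hev2, hev3] with n h1 h2 h3
      exact div_le_div_of_nonneg_left h3.le (lt_of_lt_of_le h3 h2) h1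
    · filter_upwards [hev2, hev3] with n h2 h3
      exact div_le_one_of_le₀ h2 (le_trans h3.le h2)
  have hρ_one : Tendsto ρ atTop (𝓝 1) := by
    have h := h_yx.mul h_θxy
    rw [mul_one] at h
    refine h.congr' ?_
    filter_upwards [hxs_top.eventually_gt_atTop 1] with n hn
    have hx0' : (0:ℝ) < xs n := lt_trans zero_lt_one hn
    have hy0' : (0:ℝ) < ys n := lt_of_lt_of_le hx0' (hys_ge n)
    have hx0 : xs n ≠ 0 := hx0'.ne'
    have hy0 : ys n ≠ 0 := hy0'.ne'
    have hψx := (hψpos (xs n)).ne'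
    have hψy := (hψpos (ys n)).ne'
    have hθy : θ (ys n) ≠ 0 := by
      simp only [hθ_def]; positivity
    simp only [hθ_def, hρ_def]
    field_simp
  -- bad sets
  set ε3 : ℝ := ε / 3 with hε3_def
  have hε3 : 0 < ε3 := by positivity
  set D : ℕ → Set ℝ := fun n => Set.Icc 0 (V+1) ∩
    ⋃ (m : ℕ) (_ : n ≤ m), {u | ε3 < |k (xs m + u * ψ (xs m)) - k (xs m)|} with hD_def
  set DF : ℕ → Set ℝ := fun n => Set.Icc 0 2 ∩
    ⋃ (m : ℕ) (_ : n ≤ m), {w | ε3 < |k (ys m + w * ψ (ys m)) - k (ys m)|} with hDF_def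
  have hinner_meas : ∀ (z : ℝ) , MeasurableSet {u : ℝ | ε3 < |k (z + u * ψ z) - k z|} := by
    intro z
    exact measurableSet_lt measurable_const
      (((hk.comp ((measurable_id.mul_const (ψ z)).const_add z)).sub measurable_const).abs)
  have hmeasD : ∀ n, MeasurableSet (D n) := fun n =>
    measurableSet_Icc.inter (MeasurableSet.iUnion fun m => MeasurableSet.iUnion fun _ =>
      hinner_meas (xs m))
  have hmeasDF : ∀ n, MeasurableSet (DF n) := fun n =>
    measurableSet_Icc.inter (MeasurableSet.iUnion fun m => MeasurableSet.iUnion fun _ =>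
      hinner_meas (ys m))
  have hanti : ∀ (S : ℕ → Set ℝ) (I : Set ℝ),
      Antitone (fun n => I ∩ ⋃ (m : ℕ) (_ : n ≤ m), S m) := by
    intro S I a b hab
    refine Set.inter_subset_inter_right _ ?_
    intro u hu
    simp only [Set.mem_iUnion] at hu ⊢
    obtain ⟨m, hm, hmem⟩ := hu
    exact ⟨m, hab.trans hm, hmem⟩
  have hempty : ∀ (zs : ℕ → ℝ), Tendsto zs atTop atTop →
      ((⋂ n, (Set.Icc (0:ℝ) (V+1) ∩ ⋃ (m : ℕ) (_ : n ≤ m),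
        {u | ε3 < |k (zs m + u * ψ (zs m)) - k (zs m)|})) = ∅) ∧
      ((⋂ n, (Set.Icc (0:ℝ) 2 ∩ ⋃ (m : ℕ) (_ : n ≤ m),
        {u | ε3 < |k (zs m + u * ψ (zs m)) - k (zs m)|})) = ∅) := by
    intro zs hzs
    constructor <;>
    · ext u
      simp only [Set.mem_iInter, Set.mem_empty_iff_false, iff_false]
      intro hall
      have h := (hconv u).comp hzs
      have h2 : ∀ᶠ m in atTop, |k (zs m + u * ψ (zs m)) - k (zs m)| < ε3 := by
        have := Metric.tendsto_nhds.mp h ε3 hε3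
        simpa [Real.dist_eq] using this
      obtain ⟨N, hN⟩ := eventually_atTop.1 h2
      obtain ⟨-, hu2⟩ := hall N
      simp only [Set.mem_iUnion] at hu2
      obtain ⟨m, hm, hmem⟩ := hu2
      exact absurd hmem (not_lt.2 (hN m hm).le)
  have c8pos : (0:ℝ≥0∞) < ENNReal.ofReal (1/8) := ENNReal.ofReal_pos.2 (by norm_num)
  have hDtend : Tendsto (volume ∘ D) atTop (𝓝 0) := by
    have := tendsto_measure_iInter_atTop (μ := volume)
      (fun n => (hmeasD n).nullMeasurableSet) (hanti _ _)
      ⟨0, ne_top_of_le_ne_top (measure_Icc_lt_top).ne (measure_mono Set.inter_subset_left)⟩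
    rwa [(hempty xs hxs_top).1, measure_empty] at this
  have hDFtend : Tendsto (volume ∘ DF) atTop (𝓝 0) := by
    have := tendsto_measure_iInter_atTop (μ := volume)
      (fun n => (hmeasDF n).nullMeasurableSet) (hanti _ _)
      ⟨0, ne_top_of_le_ne_top (measure_Icc_lt_top).ne (measure_mono Set.inter_subset_left)⟩
    rwa [(hempty ys hys_top).2, measure_empty] at this
  have hevD : ∀ᶠ n in atTop, volume (D n) < ENNReal.ofReal (1/8) :=
    hDtend.eventually (eventually_lt_nhds c8pos)
  have hevDF : ∀ᶠ n in atTop, volume (DF n) < ENNReal.ofReal (1/8) :=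
    hDFtend.eventually (eventually_lt_nhds c8pos)
  have hevρ1 : ∀ᶠ n in atTop, (1/2:ℝ) < ρ n :=
    hρ_one.eventually (eventually_gt_nhds (by norm_num))
  have hevρ2 : ∀ᶠ n in atTop, ρ n < 2 :=
    hρ_one.eventually (eventually_lt_nhds (by norm_num))
  have hevx1 : ∀ᶠ n in atTop, 1 ≤ xs n := hxs_top.eventually_ge_atTop 1
  obtain ⟨n, hDn, hDFn, hρ1, hρ2, hx1⟩ :=
    (hevD.and (hevDF.and (hevρ1.and (hevρ2.and hevx1)))).exists
  -- pigeonhole at index n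
  set S : Set ℝ := Set.Icc 0 (ρ n)⁻¹ \ DF n with hS_def
  set E' : Set ℝ := Set.Icc (vs n) (vs n + 1) \ D n with hE'_def
  set G : Set ℝ := (fun u => (ρ n)⁻¹ * (u - vs n)) ⁻¹' S with hG_def
  have hρn : 0 < ρ n := hρpos n
  have hρinv2 : (ρ n)⁻¹ ≤ 2 := by
    have h2 : (2:ℝ)⁻¹ ≤ ρ n := by norm_num; linarith
    calc (ρ n)⁻¹ ≤ ((2:ℝ)⁻¹)⁻¹ := by
          exact inv_anti₀ (by norm_num) h2
      _ = 2 := by norm_num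
  have hSmeas : MeasurableSet S := measurableSet_Icc.diff (hmeasDF n)
  have hGmeas : MeasurableSet G :=
    ((measurable_id.sub_const (vs n)).const_mul ((ρ n)⁻¹)) hSmeas
  have hE'meas : MeasurableSet E' := measurableSet_Icc.diff (hmeasD n)
  have hvolG : volume G = ENNReal.ofReal (ρ n) * volume S := by
    have h1 : G = (fun u : ℝ => -vs n + u) ⁻¹' ((fun t : ℝ => (ρ n)⁻¹ * t) ⁻¹' S) := by
      ext u
      simp only [hG_def, Set.mem_preimage]
      rw [neg_add_eq_sub]
    rw [h1, measure_preimage_add, Real.volume_preimage_mul_left (inv_ne_zero hρn.ne'),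
      inv_inv, abs_of_pos hρn]
  have hvolIccS : ENNReal.ofReal ((ρ n)⁻¹) ≤ volume S + volume (DF n) := by
    have hsub : Set.Icc (0:ℝ) (ρ n)⁻¹ ⊆ S ∪ DF n := by
      intro w hw
      by_cases h : w ∈ DF n
      · exact Or.inr h
      · exact Or.inl ⟨hw, h⟩
    calc ENNReal.ofReal ((ρ n)⁻¹) = volume (Set.Icc (0:ℝ) (ρ n)⁻¹) := by
          rw [Real.volume_Icc, sub_zero]
      _ ≤ volume (S ∪ DF n) := measure_mono hsub
      _ ≤ _ := measure_union_le _ _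
  have hvolIccE : ENNReal.ofReal 1 ≤ volume E' + volume (D n) := by
    have hsub : Set.Icc (vs n) (vs n + 1) ⊆ E' ∪ D n := by
      intro w hw
      by_cases h : w ∈ D n
      · exact Or.inr h
      · exact Or.inl ⟨hw, h⟩
    calc ENNReal.ofReal 1 = volume (Set.Icc (vs n) (vs n + 1)) := by
          rw [Real.volume_Icc]; norm_num
      _ ≤ volume (E' ∪ D n) := measure_mono hsub
      _ ≤ _ := measure_union_le _ _
  have hGsub : G ⊆ Set.Icc (vs n) (vs n + 1) := by
    intro u hu
    have hw : (ρ n)⁻¹ * (u - vs n) ∈ Set.Icc 0 (ρ n)⁻¹ := (hu : _ ∈ S).1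
    obtain ⟨hw1, hw2⟩ := hw
    have hρi : (0:ℝ) < (ρ n)⁻¹ := inv_pos.2 hρn
    have hcan : ρ n * (ρ n)⁻¹ = 1 := mul_inv_cancel₀ hρn.ne'
    constructor
    · nlinarith
    · nlinarith
  by_cases hne : (E' ∩ G).Nonempty
  · obtain ⟨u, huE, huG⟩ := hne
    set w : ℝ := (ρ n)⁻¹ * (u - vs n) with hw_def
    have hwS : w ∈ S := huG
    have hψx : ψ (xs n) ≠ 0 := (hψpos _).ne'
    have hψy' : ψ (xs n + vs n * ψ (xs n)) ≠ 0 := (hψpos _).ne'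
    have hkey : xs n + u * ψ (xs n) = ys n + w * ψ (ys n) := by
      simp only [hw_def, hρ_def, hys_def]
      rw [mul_comm (vs n) (ψ (xs n))] at hψy'; field_simp
      ring
    have huIcc : u ∈ Set.Icc (0:ℝ) (V+1) := by
      obtain ⟨⟨h1, h2⟩, -⟩ := huE
      exact ⟨le_trans (hvs n).1 h1, by linarith [(hvs n).2]⟩
    have hE : |k (xs n + u * ψ (xs n)) - k (xs n)| ≤ ε3 := by
      have hnotin := huE.2
      by_contra hc
      push_neg at hc
      exact hnotin ⟨huIcc, Set.mem_iUnion₂.2 ⟨n, le_rfl, hc⟩⟩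
    have hwIcc2 : w ∈ Set.Icc (0:ℝ) 2 := ⟨hwS.1.1, le_trans hwS.1.2 hρinv2⟩
    have hF : |k (ys n + w * ψ (ys n)) - k (ys n)| ≤ ε3 := by
      have hnotin := hwS.2
      by_contra hc
      push_neg at hc
      exact hnotin ⟨hwIcc2, Set.mem_iUnion₂.2 ⟨n, le_rfl, hc⟩⟩
    have hdiff : k (ys n) - k (xs n) =
        (k (xs n + u * ψ (xs n)) - k (xs n)) - (k (ys n + w * ψ (ys n)) - k (ys n)) := by
      rw [hkey]; ring
    have habs : |k (ys n) - k (xs n)| ≤ ε3 + ε3 := by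
      rw [hdiff, sub_eq_add_neg]
      exact le_trans (abs_add_le _ _) (add_le_add hE (by rwa [abs_neg]))
    have hbn := hbad n
    simp only [hys_def] at habs
    rw [hε3_def] at habs
    linarith
  · have hdisj : Disjoint E' G :=
      Set.disjoint_iff_inter_eq_empty.2 (Set.not_nonempty_iff_eq_empty.1 hne)
    have hunion_sub : E' ∪ G ⊆ Set.Icc (vs n) (vs n + 1) :=
      Set.union_subset Set.diff_subset hGsub
    have h3 : volume E' + ENNReal.ofReal (ρ n) * volume S ≤ ENNReal.ofReal 1 := by
      rw [← hvolG, ← measure_union hdisj hGmeas]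
      calc volume (E' ∪ G) ≤ volume (Set.Icc (vs n) (vs n + 1)) := measure_mono hunion_sub
        _ = ENNReal.ofReal 1 := by rw [Real.volume_Icc]; norm_num
    have h2' : ENNReal.ofReal 1 ≤ ENNReal.ofReal (ρ n) * volume S + ENNReal.ofReal (ρ n * (1/8)) := by
      calc ENNReal.ofReal 1 = ENNReal.ofReal (ρ n) * ENNReal.ofReal ((ρ n)⁻¹) := by
            rw [← ENNReal.ofReal_mul hρn.le, mul_inv_cancel₀ hρn.ne']
        _ ≤ ENNReal.ofReal (ρ n) * (volume S + volume (DF n)) := mul_le_mul_right hvolIccS _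
        _ = ENNReal.ofReal (ρ n) * volume S + ENNReal.ofReal (ρ n) * volume (DF n) := by
            rw [mul_add]
        _ ≤ _ := by
            refine add_le_add_right ?_ _
            refine le_trans (mul_le_mul_right hDFn.le _) ?_
            rw [← ENNReal.ofReal_mul hρn.le]
    have hfinal : ENNReal.ofReal 2 ≤ ENNReal.ofReal (1 + 1/8 + 2 * (1/8)) := by
      calc ENNReal.ofReal 2 = ENNReal.ofReal 1 + ENNReal.ofReal 1 := by
            rw [← ENNReal.ofReal_add] <;> norm_num
        _ ≤ (volume E' + volume (D n)) +
            (ENNReal.ofReal (ρ n) * volume S + ENNReal.ofReal (ρ n * (1/8))) :=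
              add_le_add hvolIccE h2'
        _ = (volume E' + ENNReal.ofReal (ρ n) * volume S) +
            (volume (D n) + ENNReal.ofReal (ρ n * (1/8))) := add_add_add_comm _ _ _ _
        _ ≤ ENNReal.ofReal 1 + (ENNReal.ofReal (1/8) + ENNReal.ofReal (2 * (1/8))) := by
            refine add_le_add h3 (add_le_add hDn.le (ENNReal.ofReal_le_ofReal ?_))
            nlinarith
        _ = ENNReal.ofReal (1 + 1/8 + 2 * (1/8)) := by
            rw [← ENNReal.ofReal_add, ← ENNReal.ofReal_add] <;> norm_num
    have hcon2 : (2:ℝ) ≤ 1 + 1/8 + 2 * (1/8) :=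
      (ENNReal.ofReal_le_ofReal_iff (by norm_num)).1 hfinal
    norm_num at hcon2

variable {ψ : ℝ → ℝ}

/-- Generalized inverse of `θ x = x / ψ x`. -/
noncomputable def phi (ψ : ℝ → ℝ) (s : ℝ) : ℝ :=
  sSup {x : ℝ | 1 ≤ x ∧ x / ψ x ≤ max s (1 / ψ 1)}

section Phi

variable (hψ_one : ∀ x, 1 ≤ ψ x)
  (hθ_mono : StrictMonoOn (fun x => x / ψ x) (Set.Ici 1))
  (hθ_top : Tendsto (fun x => x / ψ x) atTop atTop)
  (hψ_cont : Continuous ψ)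

include hψ_one hθ_top in
lemma phi_set_bdd (s : ℝ) :
    BddAbove {x : ℝ | 1 ≤ x ∧ x / ψ x ≤ max s (1 / ψ 1)} := by
  obtain ⟨M, hM⟩ := (hθ_top.eventually_gt_atTop (max s (1 / ψ 1))).exists_forall_of_atTop
  refine ⟨M, fun x hx => ?_⟩
  by_contra hxM
  push_neg at hxM
  exact absurd hx.2 (not_le.2 (hM x hxM.le))

lemma phi_set_nonempty (s : ℝ) :
    (1:ℝ) ∈ {x : ℝ | 1 ≤ x ∧ x / ψ x ≤ max s (1 / ψ 1)} :=
  ⟨le_refl 1, le_max_right _ _⟩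

include hψ_one hθ_top in
lemma phi_one_le (s : ℝ) : 1 ≤ phi ψ s :=
  le_csSup (phi_set_bdd hψ_one hθ_top s) (phi_set_nonempty s)

include hψ_one hθ_top in
lemma phi_mono : Monotone (phi ψ) := by
  intro s t hst
  refine csSup_le_csSup (phi_set_bdd hψ_one hθ_top t) ⟨1, phi_set_nonempty s⟩ ?_
  intro x hx
  exact ⟨hx.1, hx.2.trans (max_le_max hst (le_refl _))⟩

include hψ_one hθ_mono hθ_top in
lemma phi_theta (x : ℝ) (hx : 1 ≤ x) : phi ψ (x / ψ x) = x := by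
  have h1 : (1:ℝ) / ψ 1 ≤ x / ψ x := by
    rcases eq_or_lt_of_le hx with h | h
    · rw [← h]
    · exact (hθ_mono (Set.mem_Ici.2 le_rfl) (Set.mem_Ici.2 hx) h).le
  have hmax : max (x / ψ x) (1 / ψ 1) = x / ψ x := max_eq_left h1
  refine le_antisymm ?_ ?_
  · refine csSup_le ⟨1, phi_set_nonempty _⟩ ?_
    intro y hy
    rw [hmax] at hy
    by_contra hyx
    push_neg at hyx
    exact absurd hy.2 (not_le.2 (hθ_mono (Set.mem_Ici.2 hx) (Set.mem_Ici.2 hy.1) hyx))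
  · exact le_csSup (phi_set_bdd hψ_one hθ_top _) ⟨hx, by rw [hmax]⟩

include hψ_one hθ_mono hθ_top hψ_cont in
lemma theta_phi (s : ℝ) : phi ψ s / ψ (phi ψ s) = max s (1 / ψ 1) := by
  have hψpos : ∀ x, (0:ℝ) < ψ x := fun x => lt_of_lt_of_le one_pos (hψ_one x)
  have hθc : Continuous (fun x => x / ψ x) :=
    continuous_id.div hψ_cont (fun x => ne_of_gt (hψpos x))
  set m := max s (1 / ψ 1) with hm
  have hm1 : 1 / ψ 1 ≤ m := le_max_right _ _
  obtain ⟨M, hM⟩ := ((hθ_top.eventually_ge_atTop m).and (eventually_ge_atTop 1)).exists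
  have hex : ∃ x ∈ Set.Icc (1:ℝ) M, (fun x => x / ψ x) x = m := by
    have := intermediate_value_Icc hM.2 (hθc.continuousOn (s := Set.Icc 1 M))
    exact this ⟨hm1, hM.1⟩
  obtain ⟨x, hxmem, hxm⟩ := hex
  simp only at hxm
  have hx1 : 1 ≤ x := hxmem.1
  have : phi ψ s = x := by
    have hps : phi ψ s = phi ψ (x / ψ x) := by
      unfold phi
      have hmm : max (x / ψ x) (1 / ψ 1) = max s (1 / ψ 1) := by
        rw [hxm, hm, max_assoc, max_self]
      rw [hmm]
    rw [hps, phi_theta hψ_one hθ_mono hθ_top x hx1]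
  rw [this, hxm]

include hψ_one hθ_mono hθ_top hψ_cont in
lemma theta_phi_of_ge (s : ℝ) (hs : 1 / ψ 1 ≤ s) :
    phi ψ s / ψ (phi ψ s) = s := by
  rw [theta_phi hψ_one hθ_mono hθ_top hψ_cont, max_eq_left hs]

include hψ_one hθ_mono hθ_top in
lemma phi_tendsto : Tendsto (phi ψ) atTop atTop := by
  rw [tendsto_atTop]
  intro b
  filter_upwards [eventually_ge_atTop ((max b 1) / ψ (max b 1))] with s hs
  calc b ≤ max b 1 := le_max_left _ _
    _ = phi ψ ((max b 1) / ψ (max b 1)) :=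
        (phi_theta hψ_one hθ_mono hθ_top _ (le_max_right _ _)).symm
    _ ≤ phi ψ s := phi_mono hψ_one hθ_top hs

end Phi

theorem shift_bound {ψ k : ℝ → ℝ} {α : ℝ} (hα : α < 1) (hψ_cont : Continuous ψ)
    (hψ_one : ∀ x, 1 ≤ ψ x)
    (hθ_mono : StrictMonoOn (fun x => x / ψ x) (Set.Ici 1))
    (hθ_top : Tendsto (fun x => x / ψ x) atTop atTop)
    (hψ_smooth : ∀ v : ℝ,
      (fun x => ψ (x + v * ψ x) - ψ x - α * v * (ψ x) ^ 2 / x)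
        =o[atTop] (fun x => (ψ x) ^ 2 / x))
    (hk : Measurable k)
    (hconv : ∀ v : ℝ, Tendsto (fun x => k (x + v * ψ x) - k x) atTop (𝓝 0))
    {ε : ℝ} (hε : 0 < ε) :
    ∀ᶠ s in atTop, ∀ u ∈ Set.Icc (0:ℝ) 2, |k (phi ψ (s + u)) - k (phi ψ s)| ≤ ε := by
  have h1α : (0:ℝ) < 1 - α := by linarith
  set V : ℝ := 2 / (1 - α) + 1 with hV_def
  have hV : 0 ≤ V := by positivity
  have hUCT := uct hα hψ_one hθ_mono hθ_top hψ_smooth hk hconv V hV hε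
  have hθsh := (theta_shift hψ_one hθ_top hψ_smooth V).2
  have hev2 : ∀ᶠ x in atTop, 2 ≤ (x + V * ψ x) / ψ (x + V * ψ x) - x / ψ x := by
    refine hθsh.eventually (eventually_ge_nhds ?_)
    have hVval : (1 - α) * V = 2 + (1 - α) := by
      rw [hV_def]; field_simp
    rw [hVval]; linarith
  have hphi_top := phi_tendsto hψ_one hθ_mono hθ_top
  filter_upwards [hphi_top.eventually hUCT, hphi_top.eventually hev2,
    eventually_ge_atTop (1 / ψ 1)] with s hs1 hs2 hs3
  intro u hu
  set x := phi ψ s with hx_def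
  have hx1 : 1 ≤ x := phi_one_le hψ_one hθ_top s
  have hψx0 : (0:ℝ) < ψ x := lt_of_lt_of_le one_pos (hψ_one x)
  have hθx : x / ψ x = s := theta_phi_of_ge hψ_one hθ_mono hθ_top hψ_cont s hs3
  set z := phi ψ (s + u) with hz_def
  have hz1 : 1 ≤ z := phi_one_le hψ_one hθ_top (s + u)
  have hθz : z / ψ z = s + u :=
    theta_phi_of_ge hψ_one hθ_mono hθ_top hψ_cont (s + u)
      (le_trans hs3 (le_add_of_nonneg_right hu.1))
  have hxz : x ≤ z := phi_mono hψ_one hθ_top (le_add_of_nonneg_right hu.1)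
  have hzup : z ≤ x + V * ψ x := by
    by_contra hcon
    push_neg at hcon
    have hx2 : x + V * ψ x ∈ Set.Ici (1:ℝ) :=
      le_trans hx1 (le_add_of_nonneg_right (mul_nonneg hV hψx0.le))
    have hlt := hθ_mono hx2 (Set.mem_Ici.2 hz1) hcon
    simp only at hlt
    rw [hθz] at hlt
    rw [hθx] at hs2
    linarith [hu.2]
  set v := (z - x) / ψ x with hv_def
  have hv0 : 0 ≤ v := div_nonneg (by linarith) hψx0.le
  have hvV : v ≤ V := by rw [hv_def, div_le_iff₀ hψx0]; linarith
  have hzxv : z = x + v * ψ x := by rw [hv_def]; field_simp; ring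
  have := hs1 v ⟨hv0, hvV⟩
  rwa [← hzxv] at this


theorem forward {ψ g : ℝ → ℝ} {α : ℝ} (hα : α < 1) (hψ_cont : Continuous ψ)
    (hψ_one : ∀ x, 1 ≤ ψ x)
    (hθ_mono : StrictMonoOn (fun x => x / ψ x) (Set.Ici 1))
    (hθ_top : Tendsto (fun x => x / ψ x) atTop atTop)
    (hψ_smooth : ∀ v : ℝ,
      (fun x => ψ (x + v * ψ x) - ψ x - α * v * (ψ x) ^ 2 / x)
        =o[atTop] (fun x => (ψ x) ^ 2 / x))
    (hg_pos : ∀ x, 0 < g x) (hg_meas : Measurable g)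
    (hlcf : ∀ v : ℝ, Tendsto (fun x => g (x + v * ψ x) / g x) atTop (𝓝 1)) :
    ∃ (c εf : ℝ → ℝ) (c₀ : ℝ), Measurable c ∧ Measurable εf ∧
        (∀ t, 0 < c t) ∧ 0 < c₀ ∧
        Tendsto c atTop (𝓝 c₀) ∧ Tendsto εf atTop (𝓝 0) ∧
        ∀ x ≥ (1 : ℝ),
          g x = c x * Real.exp (∫ t in (1:ℝ)..(Real.exp (x / ψ x)), εf t / t) := by
  have hψpos : ∀ x, (0:ℝ) < ψ x := fun x => lt_of_lt_of_le one_pos (hψ_one x)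
  set k : ℝ → ℝ := fun x => Real.log (g x) with hk_def
  have hk_meas : Measurable k := hg_meas.log
  have hconv : ∀ v : ℝ, Tendsto (fun x => k (x + v * ψ x) - k x) atTop (𝓝 0) := by
    intro v
    have h1 := (Real.continuousAt_log one_ne_zero).tendsto.comp (hlcf v)
    rw [Real.log_one] at h1
    refine h1.congr (fun x => ?_)
    simp only [Function.comp_apply, hk_def]
    rw [Real.log_div (hg_pos _).ne' (hg_pos _).ne']
  set h : ℝ → ℝ := fun s => k (phi ψ s) with hh_def
  have hh_meas : Measurable h := hk_meas.comp (phi_mono hψ_one hθ_top).measurable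
  have hB : ∀ ε : ℝ, 0 < ε → ∀ᶠ s in atTop, ∀ u ∈ Set.Icc (0:ℝ) 2,
      |h (s + u) - h s| ≤ ε := fun ε hε =>
    shift_bound hα hψ_cont hψ_one hθ_mono hθ_top hψ_smooth hk_meas hconv hε
  obtain ⟨S₀, hS₀⟩ := eventually_atTop.1 (hB 1 one_pos)
  -- local boundedness
  have hbound : ∀ (n : ℕ) (t : ℝ), S₀ ≤ t → t ≤ S₀ + (n:ℝ) → |h t| ≤ |h S₀| + (n:ℝ) := by
    intro n
    induction n with
    | zero =>
      intro t h1 h2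
      push_cast at h2 ⊢
      have : t = S₀ := le_antisymm (by linarith) h1
      rw [this]; simp
    | succ m ih =>
      intro t h1 h2
      push_cast at h2 ⊢
      by_cases hc : t ≤ S₀ + (m:ℝ)
      · have := ih t h1 hc
        linarith
      · push_neg at hc
        have hu : t - (S₀ + (m:ℝ)) ∈ Set.Icc (0:ℝ) 2 := ⟨by linarith, by linarith⟩
        have hs : S₀ ≤ S₀ + (m:ℝ) := le_add_of_nonneg_right (Nat.cast_nonneg m)
        have h3 := hS₀ (S₀ + (m:ℝ)) hs _ hu
        have harg : (S₀ + (m:ℝ)) + (t - (S₀ + (m:ℝ))) = t := by ring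
        rw [harg] at h3
        have h4 := ih (S₀ + (m:ℝ)) hs le_rfl
        have h5 := abs_sub_abs_le_abs_sub (h t) (h (S₀ + (m:ℝ)))
        linarith
  set hhat : ℝ → ℝ := fun s => if s < S₀ then 0 else h s with hhat_def
  have hhat_meas : Measurable hhat :=
    Measurable.ite (measurableSet_lt measurable_id measurable_const) measurable_const hh_meas
  have hhat_eq : ∀ t, S₀ ≤ t → hhat t = h t := fun t ht => if_neg (not_lt.2 ht)
  have hint : ∀ a b : ℝ, IntervalIntegrable hhat volume a b := by
    intro a b
    set n : ℕ := ⌈max a b - S₀⌉₊ with hn_def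
    set Cb : ℝ := |h S₀| + (n:ℝ) with hCb_def
    have hCb : 0 ≤ Cb := add_nonneg (abs_nonneg _) (Nat.cast_nonneg _)
    rw [intervalIntegrable_iff]
    refine MeasureTheory.Integrable.mono' (g := fun _ => Cb)
      (integrableOn_const measure_Ioc_lt_top.ne)
      hhat_meas.aestronglyMeasurable.restrict ?_
    refine (ae_restrict_iff' measurableSet_uIoc).2 (ae_of_all _ fun t ht => ?_)
    rcases lt_or_ge t S₀ with hlt | hge
    · simp only [hhat_def, if_pos hlt, norm_zero]
      exact hCb
    · rw [hhat_eq t hge, Real.norm_eq_abs]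
      have htM : t ≤ max a b := ht.2
      have hceil := Nat.le_ceil (max a b - S₀)
      exact hbound n t hge (by rw [hn_def]; linarith)
  -- primitives and smoothing
  set F : ℝ → ℝ := fun b => ∫ t in S₀..b, hhat t with hF_def
  have hF_cont : Continuous F := intervalIntegral.continuous_primitive hint S₀
  set H : ℝ → ℝ := fun s => F (s + 1) - F s with hH_def
  have hH_cont : Continuous H :=
    (hF_cont.comp (continuous_id.add continuous_const)).sub hF_cont
  have hH_eq : ∀ s, H s = ∫ t in s..(s+1), hhat t := by
    intro s
    have h2 := intervalIntegral.integral_add_adjacent_intervals (hint S₀ s) (hint s (s+1))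
    simp only [hH_def, hF_def]
    linarith [h2]
  have HI : ∀ a b : ℝ, IntervalIntegrable H volume a b :=
    fun a b => hH_cont.intervalIntegrable a b
  set Gp : ℝ → ℝ := fun b => ∫ t in (0:ℝ)..b, H t with hGp_def
  have hGp_cont : Continuous Gp := intervalIntegral.continuous_primitive HI 0
  have hGp_deriv : ∀ b, HasDerivAt Gp (H b) b := fun b =>
    intervalIntegral.integral_hasDerivAt_right (HI 0 b)
      hH_cont.stronglyMeasurable.stronglyMeasurableAtFilter hH_cont.continuousAt
  set H₂ : ℝ → ℝ := fun s => Gp (s + 1) - Gp s with hH₂_def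
  have hH₂_cont : Continuous H₂ :=
    (hGp_cont.comp (continuous_id.add continuous_const)).sub hGp_cont
  have hH₂_deriv : ∀ s, HasDerivAt H₂ (H (s+1) - H s) s := by
    intro s
    have h1 : HasDerivAt (fun s : ℝ => Gp (s+1)) (H (s+1)) s := by
      have h2 := (hGp_deriv (s+1)).comp s ((hasDerivAt_id s).add_const 1)
      simpa [Function.comp_def] using h2
    exact h1.sub (hGp_deriv s)
  have hH₂_eq : ∀ s, H₂ s = ∫ t in s..(s+1), H t := by
    intro s
    have h2 := intervalIntegral.integral_add_adjacent_intervals (HI 0 s) (HI s (s+1))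
    simp only [hH₂_def, hGp_def]
    linarith [h2]
  set εt : ℝ → ℝ := fun s => H (s + 1) - H s with hεt_def
  have hεt_cont : Continuous εt :=
    (hH_cont.comp (continuous_id.add continuous_const)).sub hH_cont
  have hFTC : ∀ s : ℝ, ∫ t in (0:ℝ)..s, εt t = H₂ s - H₂ 0 := fun s =>
    intervalIntegral.integral_eq_sub_of_hasDerivAt (fun t _ => hH₂_deriv t)
      (hεt_cont.intervalIntegrable _ _)
  -- translation identity
  have htrans : ∀ s : ℝ, H (s + 1) = ∫ t in s..(s+1), hhat (t + 1) := by
    intro s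
    rw [hH_eq (s+1), intervalIntegral.integral_comp_add_right]
  have hint_shift : ∀ s c : ℝ, IntervalIntegrable (fun t => hhat (t + c)) volume s (s+1) := by
    intro s c
    have h2 := (hint (s + c) (s + 1 + c)).comp_add_right c
    have e1 : s + c - c = s := by ring
    have e2 : s + 1 + c - c = s + 1 := by ring
    rwa [e1, e2] at h2
  -- εt → 0
  have hεt_to : Tendsto εt atTop (𝓝 0) := by
    rw [Metric.tendsto_atTop]
    intro ε hε
    obtain ⟨S₁, hS₁⟩ := eventually_atTop.1 (hB (ε/2) (by positivity))
    refine ⟨max S₀ S₁, fun s hs => ?_⟩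
    have hsS₀ : S₀ ≤ s := le_trans (le_max_left _ _) hs
    have hsS₁ : S₁ ≤ s := le_trans (le_max_right _ _) hs
    have heq : εt s = ∫ t in s..(s+1), (hhat (t + 1) - hhat t) := by
      rw [intervalIntegral.integral_sub (hint_shift s 1) (hint s (s+1))]
      rw [hεt_def]
      simp only
      rw [hH_eq s, htrans s]
    have hb : ∀ t ∈ Set.uIoc s (s+1), ‖hhat (t + 1) - hhat t‖ ≤ ε/2 := by
      intro t ht
      rw [Set.uIoc_of_le (by linarith : s ≤ s+1)] at ht
      have htS₀ : S₀ ≤ t := le_trans hsS₀ ht.1.le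
      rw [hhat_eq t htS₀, hhat_eq (t+1) (by linarith), Real.norm_eq_abs]
      have h3 := hS₁ t (le_trans hsS₁ ht.1.le) 1 ⟨zero_le_one, one_le_two⟩
      exact h3
    have hnorm := intervalIntegral.norm_integral_le_of_norm_le_const hb
    rw [← heq] at hnorm
    rw [Real.dist_eq, sub_zero]
    have : |s + 1 - s| = 1 := by norm_num
    rw [this, mul_one] at hnorm
    calc |εt s| ≤ ε/2 := hnorm
      _ < ε := by linarith
  -- h - H → 0
  have hhH : Tendsto (fun s => h s - H s) atTop (𝓝 0) := by
    rw [Metric.tendsto_atTop]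
    intro ε hε
    obtain ⟨S₁, hS₁⟩ := eventually_atTop.1 (hB (ε/2) (by positivity))
    refine ⟨max S₀ S₁, fun s hs => ?_⟩
    have hsS₀ : S₀ ≤ s := le_trans (le_max_left _ _) hs
    have hsS₁ : S₁ ≤ s := le_trans (le_max_right _ _) hs
    have hconst : (∫ _ in s..(s+1), h s) = h s := by
      rw [intervalIntegral.integral_const]
      norm_num
    have heq : h s - H s = ∫ t in s..(s+1), (h s - hhat t) := by
      rw [intervalIntegral.integral_sub (intervalIntegrable_const) (hint s (s+1)),
        hconst, hH_eq s]
    have hb : ∀ t ∈ Set.uIoc s (s+1), ‖h s - hhat t‖ ≤ ε/2 := by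
      intro t ht
      rw [Set.uIoc_of_le (by linarith : s ≤ s+1)] at ht
      have htS₀ : S₀ ≤ t := le_trans hsS₀ ht.1.le
      rw [hhat_eq t htS₀, Real.norm_eq_abs, abs_sub_comm]
      have h3 := hS₁ s hsS₁ (t - s) ⟨by linarith [ht.1], by linarith [ht.2]⟩
      have harg : s + (t - s) = t := by ring
      rwa [harg] at h3
    have hnorm := intervalIntegral.norm_integral_le_of_norm_le_const hb
    rw [← heq] at hnorm
    rw [Real.dist_eq, sub_zero]
    have : |s + 1 - s| = 1 := by norm_num
    rw [this, mul_one] at hnorm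
    calc |h s - H s| ≤ ε/2 := hnorm
      _ < ε := by linarith
  -- H - H₂ → 0
  have hHH₂ : Tendsto (fun s => H s - H₂ s) atTop (𝓝 0) := by
    rw [Metric.tendsto_atTop]
    intro ε hε
    obtain ⟨S₁, hS₁⟩ := eventually_atTop.1 (hB (ε/2) (by positivity))
    refine ⟨max S₀ S₁, fun s hs => ?_⟩
    have hsS₀ : S₀ ≤ s := le_trans (le_max_left _ _) hs
    have hsS₁ : S₁ ≤ s := le_trans (le_max_right _ _) hs
    have hconst : (∫ _ in s..(s+1), H s) = H s := by
      rw [intervalIntegral.integral_const]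
      norm_num
    have heq : H s - H₂ s = ∫ t in s..(s+1), (H s - H t) := by
      rw [intervalIntegral.integral_sub (intervalIntegrable_const) (HI s (s+1)),
        hconst, hH₂_eq s]
    have hb : ∀ t ∈ Set.uIoc s (s+1), ‖H s - H t‖ ≤ ε/2 := by
      intro t ht
      rw [Set.uIoc_of_le (by linarith : s ≤ s+1)] at ht
      have hts : s < t := ht.1
      have ht1 : t ≤ s + 1 := ht.2
      have hHt : H t = ∫ r in s..(s+1), hhat (r + (t - s)) := by
        rw [hH_eq t]
        rw [intervalIntegral.integral_comp_add_right]
        have e1 : s + (t - s) = t := by ring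
        have e2 : s + 1 + (t - s) = t + 1 := by ring
        rw [e1, e2]
      have heq2 : H s - H t = ∫ r in s..(s+1), (hhat r - hhat (r + (t - s))) := by
        rw [intervalIntegral.integral_sub (hint s (s+1)) (hint_shift s (t - s)),
          hH_eq s, hHt]
      have hb2 : ∀ r ∈ Set.uIoc s (s+1), ‖hhat r - hhat (r + (t - s))‖ ≤ ε/2 := by
        intro r hr
        rw [Set.uIoc_of_le (by linarith : s ≤ s+1)] at hr
        have hrS₀ : S₀ ≤ r := le_trans hsS₀ hr.1.le
        rw [hhat_eq r hrS₀, hhat_eq (r + (t - s)) (by linarith [hr.1]), Real.norm_eq_abs,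
          abs_sub_comm]
        exact hS₁ r (le_trans hsS₁ hr.1.le) (t - s) ⟨by linarith, by linarith⟩
      have hnorm2 := intervalIntegral.norm_integral_le_of_norm_le_const hb2
      rw [← heq2] at hnorm2
      have : |s + 1 - s| = 1 := by norm_num
      rw [this, mul_one] at hnorm2
      exact hnorm2
    have hnorm := intervalIntegral.norm_integral_le_of_norm_le_const hb
    rw [← heq] at hnorm
    rw [Real.dist_eq, sub_zero]
    have : |s + 1 - s| = 1 := by norm_num
    rw [this, mul_one] at hnorm
    calc |H s - H₂ s| ≤ ε/2 := hnorm
      _ < ε := by linarith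
  have hhH₂ : Tendsto (fun s => h s - H₂ s) atTop (𝓝 0) := by
    have h2 := hhH.add hHH₂
    rw [add_zero] at h2
    refine h2.congr (fun s => ?_)
    ring
  -- k x - H₂ (θ x) → 0
  have hkH₂ : Tendsto (fun x => k x - H₂ (x / ψ x)) atTop (𝓝 0) := by
    have h2 := hhH₂.comp hθ_top
    refine h2.congr' ?_
    filter_upwards [eventually_ge_atTop 1] with x hx1
    simp only [Function.comp_apply, hh_def]
    rw [phi_theta hψ_one hθ_mono hθ_top x hx1]
  -- assemble
  set εf : ℝ → ℝ := fun t => εt (Real.log t) with hεf_def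
  have hεf_meas : Measurable εf := hεt_cont.measurable.comp Real.measurable_log
  have hεf_to : Tendsto εf atTop (𝓝 0) := hεt_to.comp Real.tendsto_log_atTop
  have hsubst : ∀ x : ℝ,
      (∫ t in (1:ℝ)..(Real.exp (x / ψ x)), εf t / t) = H₂ (x / ψ x) - H₂ 0 := by
    intro x
    set E : ℝ := Real.exp (x / ψ x) with hE_def
    have hE : 0 < E := Real.exp_pos _
    have hmin : 0 < min 1 E := lt_min one_pos hE
    have hpos : ∀ t ∈ Set.uIcc (1:ℝ) E, 0 < t := fun t ht =>
      lt_of_lt_of_le hmin ht.1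
    have hderiv : ∀ t ∈ Set.uIcc (1:ℝ) E, HasDerivAt Real.log t⁻¹ t := fun t ht =>
      Real.hasDerivAt_log (hpos t ht).ne'
    have hcont : ContinuousOn (fun t : ℝ => t⁻¹) (Set.uIcc 1 E) :=
      ContinuousOn.inv₀ continuousOn_id (fun t ht => (hpos t ht).ne')
    have hchg := intervalIntegral.integral_comp_smul_deriv hderiv hcont hεt_cont
    rw [Real.log_one, hE_def, Real.log_exp] at hchg
    calc (∫ t in (1:ℝ)..E, εf t / t) = ∫ t in (1:ℝ)..E, t⁻¹ • (εt ∘ Real.log) t := by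
          refine intervalIntegral.integral_congr (fun t ht => ?_)
          simp only [hεf_def, smul_eq_mul, Function.comp_apply]
          rw [div_eq_inv_mul]
      _ = ∫ u in (0:ℝ)..(x / ψ x), εt u := hchg
      _ = H₂ (x / ψ x) - H₂ 0 := hFTC _
  set c : ℝ → ℝ := fun x => g x * Real.exp (-(H₂ (x / ψ x) - H₂ 0)) with hc_def
  have hθ_cont : Continuous (fun x : ℝ => x / ψ x) :=
    continuous_id.div hψ_cont (fun x => (hψpos x).ne')
  have hc_meas : Measurable c :=
    hg_meas.mul (((hH₂_cont.comp hθ_cont).sub continuous_const).neg.rexp).measurable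
  have hc_pos : ∀ t, 0 < c t := fun t => mul_pos (hg_pos t) (Real.exp_pos _)
  have hc_eq : ∀ x, c x = Real.exp ((k x - H₂ (x / ψ x)) + H₂ 0) := by
    intro x
    rw [hc_def]
    simp only
    rw [← Real.exp_log (hg_pos x), ← Real.exp_add]
    congr 1
    simp only [hk_def]
    ring
  have hc_tend : Tendsto c atTop (𝓝 (Real.exp (H₂ 0))) := by
    have h2 : Tendsto (fun x => Real.exp ((k x - H₂ (x / ψ x)) + H₂ 0)) atTop
        (𝓝 (Real.exp (0 + H₂ 0))) :=
      (Real.continuous_exp.tendsto _).comp (hkH₂.add_const (H₂ 0))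
    rw [zero_add] at h2
    exact h2.congr (fun x => (hc_eq x).symm)
  refine ⟨c, εf, Real.exp (H₂ 0), hc_meas, hεf_meas, hc_pos, Real.exp_pos _,
    hc_tend, hεf_to, ?_⟩
  intro x _
  rw [hsubst x, hc_def]
  simp only
  rw [mul_assoc, ← Real.exp_add]
  simp


theorem backward {ψ g : ℝ → ℝ} {α : ℝ} (hα : α < 1)
    (hψ_one : ∀ x, 1 ≤ ψ x)
    (hθ_top : Tendsto (fun x => x / ψ x) atTop atTop)
    (hψ_smooth : ∀ v : ℝ,
      (fun x => ψ (x + v * ψ x) - ψ x - α * v * (ψ x) ^ 2 / x)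
        =o[atTop] (fun x => (ψ x) ^ 2 / x))
    (c εf : ℝ → ℝ) (c₀ : ℝ) (hεf_meas : Measurable εf)
    (hc_pos : ∀ t, 0 < c t) (hc₀ : 0 < c₀)
    (hc_tend : Tendsto c atTop (𝓝 c₀)) (hεf_to : Tendsto εf atTop (𝓝 0))
    (hrep : ∀ x ≥ (1:ℝ), g x = c x * Real.exp (∫ t in (1:ℝ)..(Real.exp (x / ψ x)), εf t / t))
    (v : ℝ) : Tendsto (fun x => g (x + v * ψ x) / g x) atTop (𝓝 1) := by
  have hψpos : ∀ x, (0:ℝ) < ψ x := fun x => lt_of_lt_of_le one_pos (hψ_one x)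
  set y : ℝ → ℝ := fun x => x + v * ψ x with hy_def
  have hψ_div := psi_div_tendsto hψ_one hθ_top
  have hy_ge : ∀ᶠ x in atTop, x / 2 ≤ y x := by
    have h2 : ∀ᶠ x in atTop, ψ x / x ≤ 1 / (2 * (|v| + 1)) := by
      refine hψ_div.eventually (eventually_le_nhds (by positivity))
    filter_upwards [h2, eventually_gt_atTop 0] with x hx2 hx0
    have hv1 : |v| + 1 > 0 := by positivity
    have h3 : ψ x ≤ x / (2 * (|v| + 1)) := by
      rw [div_le_div_iff₀ hx0 (by positivity)] at hx2
      rw [le_div_iff₀ (by positivity)]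
      linarith [hx2]
    have h4 : |v| * ψ x ≤ x / 2 := by
      calc |v| * ψ x ≤ (|v| + 1) * (x / (2 * (|v| + 1))) := by
            apply mul_le_mul (by linarith) h3 (hψpos x).le (by positivity)
        _ = x / 2 := by field_simp
    have h5 : -(x/2) ≤ v * ψ x := by
      have := neg_abs_le v
      nlinarith [hψpos x, abs_nonneg v]
    simp only [hy_def]
    linarith
  have hy_top : Tendsto y atTop atTop := by
    refine tendsto_atTop_mono' _ hy_ge ?_
    exact Tendsto.atTop_div_const (by norm_num) tendsto_id
  set I : ℝ → ℝ := fun x => ∫ t in (1:ℝ)..(Real.exp (x / ψ x)), εf t / t with hI_def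
  set f : ℝ → ℝ := fun t => εf t / t with hf_def
  have hf_meas : Measurable f := hεf_meas.div measurable_id
  obtain ⟨T₀', hT₀'⟩ := Metric.tendsto_atTop.1 hεf_to 1 one_pos
  set T₀ : ℝ := max T₀' 1 with hT₀_def
  have hT₀1 : (1:ℝ) ≤ T₀ := le_max_right _ _
  have hT₀bd : ∀ t, T₀ ≤ t → |εf t| ≤ 1 := by
    intro t ht
    have := hT₀' t (le_trans (le_max_left _ _) ht)
    rw [Real.dist_eq, sub_zero] at this
    exact this.le
  have htail_int : ∀ a b : ℝ, T₀ ≤ a → T₀ ≤ b → IntervalIntegrable f volume a b := by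
    intro a b ha hb
    rw [intervalIntegrable_iff]
    refine MeasureTheory.Integrable.mono' (g := fun _ => 1)
      (integrableOn_const measure_Ioc_lt_top.ne)
      hf_meas.aestronglyMeasurable.restrict ?_
    refine (ae_restrict_iff' measurableSet_uIoc).2 (ae_of_all _ fun t ht => ?_)
    have htT : T₀ ≤ t := le_trans (le_min ha hb) ht.1.le
    have ht0 : (0:ℝ) < t := lt_of_lt_of_le (lt_of_lt_of_le one_pos hT₀1) htT
    rw [hf_def, Real.norm_eq_abs, abs_div, abs_of_pos ht0, div_le_one ht0]
    exact le_trans (hT₀bd t htT) (le_trans hT₀1 htT)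
  have hθd := (theta_shift hψ_one hθ_top hψ_smooth v).2
  set C : ℝ := |(1 - α) * v| + 1 with hC_def
  have hC : 0 < C := by positivity
  have hθd_bdd : ∀ᶠ x in atTop, |y x / ψ (y x) - x / ψ x| ≤ C := by
    have h2 := Metric.tendsto_nhds.1 hθd 1 one_pos
    filter_upwards [h2] with x hx
    rw [Real.dist_eq] at hx
    have := abs_sub_abs_le_abs_sub ((x + v * ψ x) / ψ (x + v * ψ x) - x / ψ x) ((1-α)*v)
    simp only [hy_def]
    rw [hC_def]
    have h3 : |(x + v * ψ x) / ψ (x + v * ψ x) - x / ψ x - (1-α)*v| < 1 := hx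
    calc |(x + v * ψ x) / ψ (x + v * ψ x) - x / ψ x|
        ≤ |(x + v * ψ x) / ψ (x + v * ψ x) - x / ψ x - (1-α)*v| + |(1-α)*v| := by
          have := abs_add_le ((x + v * ψ x) / ψ (x + v * ψ x) - x / ψ x - (1-α)*v) ((1-α)*v)
          simpa using this
      _ ≤ |(1-α)*v| + 1 := by linarith
  have hθy_top : Tendsto (fun x => y x / ψ (y x)) atTop atTop := hθ_top.comp hy_top
  have hIdiff : Tendsto (fun x => I (y x) - I x) atTop (𝓝 0) := by
    by_cases hcase : IntervalIntegrable f volume 1 T₀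
    · have hf_int : ∀ b : ℝ, 1 ≤ b → IntervalIntegrable f volume 1 b := by
        intro b hb
        rcases le_total b T₀ with hbT | hTb
        · exact hcase.mono_set (Set.uIcc_subset_uIcc
            (Set.mem_uIcc.2 (Or.inl ⟨le_rfl, hT₀1⟩))
            (Set.mem_uIcc.2 (Or.inl ⟨hb, hbT⟩)))
        · exact hcase.trans (htail_int T₀ b le_rfl hTb)
      rw [Metric.tendsto_atTop]
      intro ε hε
      set δ : ℝ := ε / (2 * C) with hδ_def
      have hδ : 0 < δ := by positivity
      obtain ⟨T₁', hT₁'⟩ := Metric.tendsto_atTop.1 hεf_to δ hδ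
      set T₁ : ℝ := max T₁' T₀ with hT₁_def
      have hT₁T₀ : T₀ ≤ T₁ := le_max_right _ _
      have hT₁pos : (0:ℝ) < T₁ := lt_of_lt_of_le (lt_of_lt_of_le one_pos hT₀1) hT₁T₀
      have hδbd : ∀ t, T₁ ≤ t → |εf t| ≤ δ := by
        intro t ht
        have := hT₁' t (le_trans (le_max_left _ _) ht)
        rw [Real.dist_eq, sub_zero] at this
        exact this.le
      have hev : ∀ᶠ x in atTop, Real.log T₁ ≤ x / ψ x ∧
          Real.log T₁ ≤ y x / ψ (y x) ∧ |y x / ψ (y x) - x / ψ x| ≤ C ∧ 1 ≤ x ∧ 1 ≤ y x := by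
        filter_upwards [hθ_top.eventually_ge_atTop (Real.log T₁),
          hθy_top.eventually_ge_atTop (Real.log T₁), hθd_bdd, eventually_ge_atTop 1,
          hy_top.eventually_ge_atTop 1] with x h1 h2 h3 h4 h5
        exact ⟨h1, h2, h3, h4, h5⟩
      obtain ⟨N, hN⟩ := eventually_atTop.1 hev
      refine ⟨N, fun x hx => ?_⟩
      obtain ⟨h1, h2, h3, hx1, hy1⟩ := hN x hx
      set A : ℝ := Real.exp (x / ψ x) with hA_def
      set B : ℝ := Real.exp (y x / ψ (y x)) with hB_def
      have hApos : 0 < A := Real.exp_pos _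
      have hBpos : 0 < B := Real.exp_pos _
      have hA1 : T₁ ≤ A := by
        rw [hA_def, ← Real.exp_log hT₁pos]
        exact Real.exp_le_exp.2 h1
      have hB1 : T₁ ≤ B := by
        rw [hB_def, ← Real.exp_log hT₁pos]
        exact Real.exp_le_exp.2 h2
      have hA1' : (1:ℝ) ≤ A := le_trans (le_trans hT₀1 hT₁T₀) hA1
      have hB1' : (1:ℝ) ≤ B := le_trans (le_trans hT₀1 hT₁T₀) hB1
      have hsplit : I (y x) - I x = ∫ t in A..B, f t :=
        intervalIntegral.integral_interval_sub_left (hf_int B hB1') (hf_int A hA1')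
      have hintAB : IntervalIntegrable f volume A B :=
        htail_int A B (le_trans hT₁T₀ hA1) (le_trans hT₁T₀ hB1)
      have hlog : Real.log (B / A) = y x / ψ (y x) - x / ψ x := by
        rw [Real.log_div hBpos.ne' hApos.ne', hA_def, hB_def, Real.log_exp, Real.log_exp]
      -- generic bound on |∫ t in A..B, f|
      have key : ∀ P Q : ℝ, T₁ ≤ P → P ≤ Q → |∫ t in P..Q, f t| ≤ δ * Real.log (Q / P) := by
        intro P Q hP hPQ
        have hPpos : 0 < P := lt_of_lt_of_le hT₁pos hP
        have hQpos : 0 < Q := lt_of_lt_of_le hPpos hPQ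
        have hintPQ : IntervalIntegrable f volume P Q :=
          htail_int P Q (le_trans hT₁T₀ hP) (le_trans hT₁T₀ (le_trans hP hPQ))
        have hd_int : IntervalIntegrable (fun t => δ * (1/t)) volume P Q := by
          apply ContinuousOn.intervalIntegrable
          apply ContinuousOn.mul continuousOn_const
          apply ContinuousOn.div continuousOn_const continuousOn_id
          intro t ht
          rw [Set.uIcc_of_le hPQ] at ht
          exact (lt_of_lt_of_le hPpos ht.1).ne'
        calc |∫ t in P..Q, f t| = ‖∫ t in P..Q, f t‖ := (Real.norm_eq_abs _).symm
          _ ≤ ∫ t in P..Q, ‖f t‖ :=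
              intervalIntegral.norm_integral_le_integral_norm hPQ
          _ ≤ ∫ t in P..Q, δ * (1/t) := by
              refine intervalIntegral.integral_mono_on hPQ hintPQ.norm hd_int ?_
              intro t ht
              have ht0 : 0 < t := lt_of_lt_of_le hPpos ht.1
              rw [hf_def, Real.norm_eq_abs, abs_div, abs_of_pos ht0]
              rw [div_le_iff₀ ht0]
              have : |εf t| ≤ δ := hδbd t (le_trans hP ht.1)
              calc |εf t| ≤ δ := this
                _ = δ * (1/t) * t := by field_simp
          _ = δ * Real.log (Q / P) := by
              rw [intervalIntegral.integral_const_mul, integral_one_div]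
              intro hc0
              rw [Set.uIcc_of_le hPQ] at hc0
              exact absurd hc0.1 (not_le.2 hPpos)
      have habs : |∫ t in A..B, f t| ≤ δ * C := by
        rcases le_total A B with hAB | hBA
        · refine le_trans (key A B hA1 hAB) ?_
          refine mul_le_mul_of_nonneg_left ?_ hδ.le
          rw [hlog]
          exact le_trans (le_abs_self _) h3
        · rw [intervalIntegral.integral_symm B A, abs_neg]
          refine le_trans (key B A hB1 hBA) ?_
          refine mul_le_mul_of_nonneg_left ?_ hδ.le
          have : Real.log (A / B) = -(Real.log (B / A)) := by
            rw [← Real.log_inv]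
            congr 1
            rw [inv_div]
          rw [this, hlog]
          calc -(y x / ψ (y x) - x / ψ x) ≤ |y x / ψ (y x) - x / ψ x| := neg_le_abs _
            _ ≤ C := h3
      rw [Real.dist_eq, sub_zero, hsplit]
      have hδC : δ * C = ε / 2 := by
        rw [hδ_def]
        field_simp
      calc |∫ t in A..B, f t| ≤ δ * C := habs
        _ = ε / 2 := hδC
        _ < ε := by linarith
    · have hzero : ∀ x : ℝ, T₀ ≤ Real.exp (x / ψ x) → I x = 0 := by
        intro x hxE
        rw [hI_def]
        simp only
        apply intervalIntegral.integral_undef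
        intro hcon
        exact hcase (hcon.mono_set (Set.uIcc_subset_uIcc
          (Set.mem_uIcc.2 (Or.inl ⟨le_rfl, le_trans hT₀1 hxE⟩))
          (Set.mem_uIcc.2 (Or.inl ⟨hT₀1, hxE⟩))))
      have hevz : ∀ᶠ x in atTop, I (y x) - I x = 0 := by
        filter_upwards [hθ_top.eventually_ge_atTop (Real.log T₀),
          hθy_top.eventually_ge_atTop (Real.log T₀)] with x h1 h2
        have hT₀pos : (0:ℝ) < T₀ := lt_of_lt_of_le one_pos hT₀1
        have e1 : T₀ ≤ Real.exp (x / ψ x) := by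
          rw [← Real.exp_log hT₀pos]; exact Real.exp_le_exp.2 h1
        have e2 : T₀ ≤ Real.exp (y x / ψ (y x)) := by
          rw [← Real.exp_log hT₀pos]; exact Real.exp_le_exp.2 h2
        rw [hzero x e1, hzero (y x) e2, sub_zero]
      refine Tendsto.congr' ?_ tendsto_const_nhds
      filter_upwards [hevz] with x hx
      exact hx.symm
  -- assemble
  have hcr : Tendsto (fun x => c (y x) / c x) atTop (𝓝 1) := by
    have h2 := (hc_tend.comp hy_top).div hc_tend hc₀.ne'
    rwa [div_self hc₀.ne'] at h2
  have hexp : Tendsto (fun x => Real.exp (I (y x) - I x)) atTop (𝓝 1) := by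
    have h2 := (Real.continuous_exp.tendsto _).comp hIdiff
    rwa [Real.exp_zero] at h2
  have hfinal := hcr.mul hexp
  rw [mul_one] at hfinal
  refine hfinal.congr' ?_
  filter_upwards [hy_top.eventually_ge_atTop 1, eventually_ge_atTop 1] with x hy1 hx1
  rw [hrep x hx1, hrep (y x) hy1]
  rw [Real.exp_sub]
  have hcx := (hc_pos x).ne'
  have hex := (Real.exp_pos (I x)).ne'
  field_simp [hI_def]
  try ring

end Scratch

/-- Integral representation theorem for `ψ`-l.c.f.'s with `ψ ∈ 𝒦₁`,
with `θ(x) = x/ψ(x)` in place of `γ(x)`. -/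
theorem psi_lcf_integral_representation_theta (ψ L g : ℝ → ℝ) (α : ℝ) (hα : α < 1)
    (hψ_cont : Continuous ψ) (hψ_one : ∀ x, 1 ≤ ψ x)
    (hL_pos : ∀ x, 0 < x → 0 < L x)
    (hL_slow : ∀ u : ℝ, 0 < u → Tendsto (fun x => L (u * x) / L x) atTop (𝓝 1))
    (hψ_rv : ∀ x, 0 < x → ψ x = x ^ α * L x)
    (hθ_mono : StrictMonoOn (fun x => x / ψ x) (Set.Ici 1))
    (hθ_top : Tendsto (fun x => x / ψ x) atTop atTop)
    (hψ_smooth : ∀ v : ℝ,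
      (fun x => ψ (x + v * ψ x) - ψ x - α * v * (ψ x) ^ 2 / x)
        =o[atTop] (fun x => (ψ x) ^ 2 / x))
    (hg_pos : ∀ x, 0 < g x) (hg_meas : Measurable g) :
    (∀ v : ℝ, Tendsto (fun x => g (x + v * ψ x) / g x) atTop (𝓝 1)) ↔
      ∃ (c ε : ℝ → ℝ) (c₀ : ℝ), Measurable c ∧ Measurable ε ∧
        (∀ t, 0 < c t) ∧ 0 < c₀ ∧
        Tendsto c atTop (𝓝 c₀) ∧ Tendsto ε atTop (𝓝 0) ∧
        ∀ x ≥ (1 : ℝ),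
          g x = c x * Real.exp (∫ t in (1:ℝ)..(Real.exp (x / ψ x)), ε t / t) := by
  constructor
  · intro hlcf
    exact Scratch.forward hα hψ_cont hψ_one hθ_mono hθ_top hψ_smooth hg_pos hg_meas hlcf
  · rintro ⟨c, ε, c₀, hc_meas, hε_meas, hc_pos, hc₀, hc_tend, hε_to, hrep⟩ v
    exact Scratch.backward hα hψ_one hθ_top hψ_smooth c ε c₀ hε_meas hc_pos hc₀
      hc_tend hε_to hrep v
end

section
/- Let g be positive measurable and ψ ∈ 𝒦. Then g is a ψ-l.c.f. if and only if the composition g ∘ γ^{(−1)} is an l.c.f., where γ(x) = ∫₁^x dt/ψ(t) and γ^{(−1)} is its inverse. -/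
open Filter Real MeasureTheory
open scoped Topology

section helpers

lemma gamma_diff_bounds' (ψ : ℝ → ℝ) (hψ_one : ∀ x, 1 ≤ ψ x) (hψ_mono : Monotone ψ)
    {x x' : ℝ} (h1 : x ≤ x') :
    (x' - x) / ψ x' ≤ (∫ t in (1:ℝ)..x', 1 / ψ t) - (∫ t in (1:ℝ)..x, 1 / ψ t) ∧
      (∫ t in (1:ℝ)..x', 1 / ψ t) - (∫ t in (1:ℝ)..x, 1 / ψ t) ≤ (x' - x) / ψ x := by
  have hpos : ∀ z, 0 < ψ z := fun z => lt_of_lt_of_le one_pos (hψ_one z)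
  have hanti : Antitone (fun t => 1 / ψ t) := fun u v huv =>
    one_div_le_one_div_of_le (hpos u) (hψ_mono huv)
  have hint : ∀ a b : ℝ, IntervalIntegrable (fun t => 1 / ψ t) volume a b := fun a b =>
    hanti.intervalIntegrable
  have hadd : (∫ t in (1:ℝ)..x, 1 / ψ t) + (∫ t in x..x', 1 / ψ t)
      = ∫ t in (1:ℝ)..x', 1 / ψ t :=
    intervalIntegral.integral_add_adjacent_intervals (hint 1 x) (hint x x')
  have hdiff : (∫ t in (1:ℝ)..x', 1 / ψ t) - (∫ t in (1:ℝ)..x, 1 / ψ t)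
      = ∫ t in x..x', 1 / ψ t := by rw [← hadd]; ring
  constructor
  · rw [hdiff]
    have hlow : (∫ t in x..x', (1 / ψ x' : ℝ)) ≤ ∫ t in x..x', 1 / ψ t := by
      apply intervalIntegral.integral_mono_on h1 intervalIntegrable_const (hint x x')
      intro t ht
      exact hanti ht.2
    rw [intervalIntegral.integral_const, smul_eq_mul] at hlow
    calc (x' - x) / ψ x' = (x' - x) * (1 / ψ x') := by rw [div_eq_mul_one_div]
    _ ≤ ∫ t in x..x', 1 / ψ t := hlow
  · rw [hdiff]
    have hup : (∫ t in x..x', 1 / ψ t) ≤ ∫ t in x..x', (1 / ψ x : ℝ) := by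
      apply intervalIntegral.integral_mono_on h1 (hint x x') intervalIntegrable_const
      intro t ht
      exact hanti ht.1
    rw [intervalIntegral.integral_const, smul_eq_mul] at hup
    calc (∫ t in x..x', 1 / ψ t) ≤ (x' - x) * (1 / ψ x) := hup
    _ = (x' - x) / ψ x := by field_simp

lemma unif_key (G Ψ : ℝ → ℝ) (hΨ : ∀ x, 0 < Ψ x) (hGmeas : Measurable G)
    (hG : ∀ s : ℝ, Tendsto (fun x => G (x + s * Ψ x) - G x) atTop (𝓝 0))
    (x x' : ℕ → ℝ) (hx : Tendsto x atTop atTop) (hx' : Tendsto x' atTop atTop)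
    (T c : ℝ) (hT : 0 ≤ T) (hc : 0 < c)
    (hdist : ∀ᶠ n in atTop, |x' n - x n| ≤ T * Ψ (x n))
    (hrlo : ∀ᶠ n in atTop, c * Ψ (x' n) ≤ Ψ (x n))
    (hrhi : ∀ᶠ n in atTop, c * Ψ (x n) ≤ Ψ (x' n)) :
    Tendsto (fun n => G (x' n) - G (x n)) atTop (𝓝 0) := by
  rw [NormedAddCommGroup.tendsto_nhds_zero]
  intro ε hε
  set M' : ℝ := (1 + T) / c with hM'
  set δ : ℝ := c / (2 * (c + 1)) with hδdef
  have hδ : 0 < δ := by positivity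
  have hmeas1 : ∀ n, StronglyMeasurable (fun s => G (x n + s * Ψ (x n)) - G (x n)) := by
    intro n
    exact (((hGmeas.comp ((measurable_id.mul_const (Ψ (x n))).const_add (x n)))).sub
      measurable_const).stronglyMeasurable
  have hmeas2 : ∀ n, StronglyMeasurable (fun s => G (x' n + s * Ψ (x' n)) - G (x' n)) := by
    intro n
    exact (((hGmeas.comp ((measurable_id.mul_const (Ψ (x' n))).const_add (x' n)))).sub
      measurable_const).stronglyMeasurable
  obtain ⟨tE, htE_sub, htE_meas, htE_small, htE_unif⟩ :=
    MeasureTheory.tendstoUniformlyOn_of_ae_tendsto (μ := volume)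
      (f := fun n s => G (x n + s * Ψ (x n)) - G (x n)) (g := fun _ => (0:ℝ))
      (s := Set.Icc (0:ℝ) 1) hmeas1 stronglyMeasurable_const measurableSet_Icc
      (by rw [Real.volume_Icc]; exact ENNReal.ofReal_ne_top)
      (MeasureTheory.ae_of_all _ (fun s _ => (hG s).comp hx)) hδ
  obtain ⟨tF, htF_sub, htF_meas, htF_small, htF_unif⟩ :=
    MeasureTheory.tendstoUniformlyOn_of_ae_tendsto (μ := volume)
      (f := fun n s => G (x' n + s * Ψ (x' n)) - G (x' n)) (g := fun _ => (0:ℝ))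
      (s := Set.Icc (-M') M') hmeas2 stronglyMeasurable_const measurableSet_Icc
      (by rw [Real.volume_Icc]; exact ENNReal.ofReal_ne_top)
      (MeasureTheory.ae_of_all _ (fun s _ => (hG s).comp hx')) hδ
  have hu1 := Metric.tendstoUniformlyOn_iff.mp htE_unif (ε/3) (by positivity)
  have hu2 := Metric.tendstoUniformlyOn_iff.mp htF_unif (ε/3) (by positivity)
  filter_upwards [hdist, hrlo, hrhi, hu1, hu2] with n h1 h2 h3 h4 h5
  set r : ℝ := Ψ (x n) / Ψ (x' n) with hrdef
  set t : ℝ := (x' n - x n) / Ψ (x n) with htdef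
  have hΨx := hΨ (x n)
  have hΨx' := hΨ (x' n)
  have hr_pos : 0 < r := by positivity
  have hrc : c ≤ r := (le_div_iff₀ hΨx').mpr h2
  have hrC : r ≤ c⁻¹ := by
    rw [div_le_iff₀ hΨx']
    have : c⁻¹ * (c * Ψ (x n)) ≤ c⁻¹ * Ψ (x' n) := by
      apply mul_le_mul_of_nonneg_left h3 (by positivity)
    calc Ψ (x n) = c⁻¹ * (c * Ψ (x n)) := by field_simp
    _ ≤ c⁻¹ * Ψ (x' n) := this
  have ht_abs : |t| ≤ T := by
    rw [htdef, abs_div, abs_of_pos hΨx, div_le_iff₀ hΨx]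
    exact h1
  set φ : ℝ → ℝ := fun s => (s - t) * r with hφdef
  have hscale : ∀ s ∈ Set.Icc (0:ℝ) 1, φ s ∈ Set.Icc (-M') M' := by
    intro s hs
    have h6 : |φ s| ≤ M' := by
      rw [hφdef]
      have h7 : |s - t| ≤ 1 + T := by
        have hsa : |s| ≤ 1 := abs_le.mpr ⟨by linarith [hs.1], hs.2⟩
        calc |s - t| ≤ |s| + |t| := abs_sub s t
        _ ≤ 1 + T := add_le_add hsa ht_abs
      calc |(s - t) * r| = |s - t| * r := by rw [abs_mul, abs_of_pos hr_pos]
      _ ≤ (1 + T) * c⁻¹ := by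
          apply mul_le_mul h7 hrC (le_of_lt hr_pos) (by positivity)
      _ = M' := by rw [hM']; field_simp
    exact Set.mem_Icc.mpr (abs_le.mp h6)
  have hexists : ∃ s, s ∈ Set.Icc (0:ℝ) 1 \ tE ∧ φ s ∈ Set.Icc (-M') M' \ tF := by
    by_contra hcon
    push_neg at hcon
    have hsub : Set.Icc (0:ℝ) 1 ⊆ tE ∪ φ ⁻¹' tF := by
      intro s hs
      by_cases hsE : s ∈ tE
      · exact Or.inl hsE
      · right
        by_contra hsF
        exact hcon s ⟨hs, hsE⟩ ⟨hscale s hs, hsF⟩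
    have hpre : volume (φ ⁻¹' tF) ≤ ENNReal.ofReal c⁻¹ * ENNReal.ofReal δ := by
      have heq : φ ⁻¹' tF = (fun s => s + -t) ⁻¹' ((fun s => s * r) ⁻¹' tF) := by
        ext s; simp [hφdef, sub_eq_add_neg]
      rw [heq]
      rw [measure_preimage_add_right]
      rw [Real.volume_preimage_mul_right (ne_of_gt hr_pos)]
      have h8 : |r⁻¹| ≤ c⁻¹ := by
        rw [abs_of_pos (by positivity)]
        exact inv_anti₀ hc hrc
      exact mul_le_mul' (ENNReal.ofReal_le_ofReal h8) htF_small
    have hmeascomp : volume (Set.Icc (0:ℝ) 1)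
        ≤ ENNReal.ofReal δ + ENNReal.ofReal c⁻¹ * ENNReal.ofReal δ := by
      calc volume (Set.Icc (0:ℝ) 1) ≤ volume (tE ∪ φ ⁻¹' tF) := measure_mono hsub
      _ ≤ volume tE + volume (φ ⁻¹' tF) := measure_union_le _ _
      _ ≤ ENNReal.ofReal δ + ENNReal.ofReal c⁻¹ * ENNReal.ofReal δ := add_le_add htE_small hpre
    rw [Real.volume_Icc] at hmeascomp
    have heq2 : ENNReal.ofReal δ + ENNReal.ofReal c⁻¹ * ENNReal.ofReal δ
        = ENNReal.ofReal (δ + c⁻¹ * δ) := by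
      rw [ENNReal.ofReal_add (le_of_lt hδ) (by positivity), ENNReal.ofReal_mul (by positivity)]
    rw [heq2] at hmeascomp
    have hval : δ + c⁻¹ * δ = 1/2 := by
      rw [hδdef]; field_simp
    rw [hval] at hmeascomp
    have heq3 : (1:ℝ) - 0 = 1 := by norm_num
    rw [heq3] at hmeascomp
    have h12 : ENNReal.ofReal (1/2 : ℝ) < ENNReal.ofReal 1 := by
      rw [ENNReal.ofReal_lt_ofReal_iff one_pos]; norm_num
    exact absurd hmeascomp (not_le.mpr h12)
  obtain ⟨s, hsE, hsF⟩ := hexists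
  have heq : x n + s * Ψ (x n) = x' n + φ s * Ψ (x' n) := by
    have h9 : r * Ψ (x' n) = Ψ (x n) := div_mul_cancel₀ _ (ne_of_gt hΨx')
    have h10 : t * Ψ (x n) = x' n - x n := div_mul_cancel₀ _ (ne_of_gt hΨx)
    have h11 : φ s * Ψ (x' n) = (s - t) * Ψ (x n) := by
      rw [hφdef]; rw [mul_assoc, h9]
    rw [h11, sub_mul, h10]; ring
  have hb1 : ‖G (x n + s * Ψ (x n)) - G (x n)‖ < ε/3 := by
    have := h4 s hsE
    rwa [dist_zero_left] at this
  have hb2 : ‖G (x' n + φ s * Ψ (x' n)) - G (x' n)‖ < ε/3 := by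
    have := h5 (φ s) hsF
    rwa [dist_zero_left] at this
  have hkey : G (x' n) - G (x n) =
      (G (x n + s * Ψ (x n)) - G (x n)) - (G (x' n + φ s * Ψ (x' n)) - G (x' n)) := by
    rw [heq]; ring
  rw [hkey]
  calc ‖(G (x n + s * Ψ (x n)) - G (x n)) - (G (x' n + φ s * Ψ (x' n)) - G (x' n))‖
      ≤ ‖G (x n + s * Ψ (x n)) - G (x n)‖ + ‖G (x' n + φ s * Ψ (x' n)) - G (x' n)‖ :=
        norm_sub_le _ _
    _ < ε/3 + ε/3 := add_lt_add hb1 hb2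
    _ < ε := by linarith

end helpers

/-- For `ψ ∈ 𝒦` with `γ(x) = ∫₁^x dt/ψ(t)` and inverse `γinv`:
`g` is a `ψ`-l.c.f. iff `g ∘ γinv` is an l.c.f. -/
theorem psi_lcf_iff_comp_gamma_inv_lcf (ψ a g γinv : ℝ → ℝ)
    (hψ_one : ∀ x, 1 ≤ ψ x) (hψ_mono : Monotone ψ)
    (hψ_small : Tendsto (fun x => ψ x / x) atTop (𝓝 0))
    (ha_anti : AntitoneOn a (Set.Ioi 0))
    (ha_pos : ∀ v : ℝ, 0 < v → 0 < a v)
    (hA : ∀ v : ℝ, 0 < v → ∀ᶠ x in atTop, a v * ψ x ≤ ψ (x - v * ψ x))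
    (ha_int : Tendsto (fun r => ∫ u in (0:ℝ)..r, a u) atTop atTop)
    (hinv_left : ∀ x ≥ (1:ℝ), γinv (∫ t in (1:ℝ)..x, 1 / ψ t) = x)
    (hinv_right : ∀ y ≥ (0:ℝ), (∫ t in (1:ℝ)..(γinv y), 1 / ψ t) = y ∧ 1 ≤ γinv y)
    (hg_pos : ∀ x, 0 < g x) (hg_meas : Measurable g) :
    (∀ v : ℝ, Tendsto (fun x => g (x + v * ψ x) / g x) atTop (𝓝 1)) ↔
      (∀ v : ℝ, Tendsto (fun y => g (γinv (y + v)) / g (γinv y)) atTop (𝓝 1)) := by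
  have hpos : ∀ z, 0 < ψ z := fun z => lt_of_lt_of_le one_pos (hψ_one z)
  have hγ_mono : ∀ {u w : ℝ}, u ≤ w →
      (∫ t in (1:ℝ)..u, 1 / ψ t) ≤ ∫ t in (1:ℝ)..w, 1 / ψ t := by
    intro u w h
    have h2 := (gamma_diff_bounds' ψ hψ_one hψ_mono h).1
    have h3 : 0 ≤ (w - u) / ψ w := div_nonneg (by linarith) (le_of_lt (hpos w))
    linarith
  have hγ_one : (∫ t in (1:ℝ)..(1:ℝ), 1 / ψ t) = 0 := intervalIntegral.integral_same
  have hγ_nonneg : ∀ z, 1 ≤ z → 0 ≤ ∫ t in (1:ℝ)..z, 1 / ψ t := fun z hz => by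
    have := hγ_mono hz
    rw [hγ_one] at this
    exact this
  have hγ_ub : ∀ z, 1 ≤ z → (∫ t in (1:ℝ)..z, 1 / ψ t) ≤ z - 1 := by
    intro z hz
    have h2 := (gamma_diff_bounds' ψ hψ_one hψ_mono hz).2
    rw [hγ_one] at h2
    have h3 : (z - 1) / ψ 1 ≤ z - 1 := div_le_self (by linarith) (hψ_one 1)
    linarith
  have hγinv_ge : ∀ y, 0 ≤ y → y + 1 ≤ γinv y := by
    intro y hy
    obtain ⟨h1, h2⟩ := hinv_right y hy
    have := hγ_ub (γinv y) h2
    rw [h1] at this; linarith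
  have hγ_tendsto : Tendsto (fun z => ∫ t in (1:ℝ)..z, 1 / ψ t) atTop atTop := by
    rw [tendsto_atTop_atTop]
    intro b
    refine ⟨γinv (max b 0), fun z hz => ?_⟩
    obtain ⟨h1, _⟩ := hinv_right (max b 0) (le_max_right _ _)
    calc b ≤ max b 0 := le_max_left _ _
    _ = ∫ t in (1:ℝ)..(γinv (max b 0)), 1 / ψ t := h1.symm
    _ ≤ ∫ t in (1:ℝ)..z, 1 / ψ t := hγ_mono hz
  have ha_le_one : ∀ v : ℝ, 0 < v → a v ≤ 1 := by
    intro v hv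
    obtain ⟨z, hz1⟩ := (hA v hv).exists
    have h2 : z - v * ψ z ≤ z := by nlinarith [hpos z]
    have h3 : ψ (z - v * ψ z) ≤ ψ z := hψ_mono h2
    nlinarith [hpos z]
  constructor
  · -- forward: ψ-l.c.f. → composed l.c.f.
    intro hg
    have hG : ∀ s : ℝ,
        Tendsto (fun z => Real.log (g (z + s * ψ z)) - Real.log (g z)) atTop (𝓝 0) := by
      intro s
      have h1 : Tendsto (fun z => Real.log (g (z + s * ψ z) / g z)) atTop (𝓝 (Real.log 1)) :=
        ((Real.continuousAt_log one_ne_zero).tendsto).comp (hg s)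
      rw [Real.log_one] at h1
      exact h1.congr (fun z => Real.log_div (ne_of_gt (hg_pos _)) (ne_of_gt (hg_pos _)))
    have key : ∀ u : ℝ, 0 < u →
        Tendsto (fun y => g (γinv (y + u)) / g (γinv y)) atTop (𝓝 1) := by
      intro u hu
      have hau := ha_pos u hu
      rw [tendsto_iff_seq_tendsto]
      intro yseq hyseq
      have hy0 : ∀ᶠ n in atTop, 0 ≤ yseq n := hyseq.eventually (eventually_ge_atTop 0)
      have hxge : ∀ᶠ n in atTop, yseq n + 1 ≤ γinv (yseq n) := by
        filter_upwards [hy0] with n hn; exact hγinv_ge _ hn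
      have hx : Tendsto (fun n => γinv (yseq n)) atTop atTop :=
        tendsto_atTop_mono' atTop hxge (tendsto_atTop_add_const_right atTop 1 hyseq)
      have hx'ge : ∀ᶠ n in atTop, (yseq n + u) + 1 ≤ γinv (yseq n + u) := by
        filter_upwards [hy0] with n hn; exact hγinv_ge _ (by linarith)
      have hx' : Tendsto (fun n => γinv (yseq n + u)) atTop atTop :=
        tendsto_atTop_mono' atTop hx'ge
          (tendsto_atTop_add_const_right atTop 1
            (tendsto_atTop_add_const_right atTop u hyseq))
      have hbundle : ∀ᶠ n in atTop, γinv (yseq n) ≤ γinv (yseq n + u) ∧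
          a u * ψ (γinv (yseq n + u)) ≤ ψ (γinv (yseq n)) ∧
          |γinv (yseq n + u) - γinv (yseq n)| ≤ (u / a u) * ψ (γinv (yseq n)) := by
        filter_upwards [hy0, hx'.eventually (hA u hu)] with n hn hAn
        obtain ⟨hgx, hx1⟩ := hinv_right (yseq n) hn
        obtain ⟨hgx', hx1'⟩ := hinv_right (yseq n + u) (by linarith)
        have hle : γinv (yseq n) ≤ γinv (yseq n + u) := by
          by_contra hcon
          push_neg at hcon
          have h2 := (gamma_diff_bounds' ψ hψ_one hψ_mono (le_of_lt hcon)).1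
          rw [hgx, hgx'] at h2
          have h3 : 0 < (γinv (yseq n) - γinv (yseq n + u)) / ψ (γinv (yseq n)) :=
            div_pos (by linarith) (hpos _)
          linarith
        obtain ⟨hdl, hdr⟩ := gamma_diff_bounds' ψ hψ_one hψ_mono hle
        rw [hgx, hgx'] at hdl hdr
        have h4 : yseq n + u - yseq n = u := by ring
        rw [h4] at hdl hdr
        have hd1 : γinv (yseq n + u) - γinv (yseq n) ≤ u * ψ (γinv (yseq n + u)) := by
          have := hdl
          rw [div_le_iff₀ (hpos _)] at this
          linarith
        have hψle : a u * ψ (γinv (yseq n + u)) ≤ ψ (γinv (yseq n)) := by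
          have h5 : γinv (yseq n + u) - u * ψ (γinv (yseq n + u)) ≤ γinv (yseq n) := by
            linarith
          exact le_trans hAn (hψ_mono h5)
        refine ⟨hle, hψle, ?_⟩
        rw [abs_of_nonneg (by linarith)]
        have hψx'pos := hpos (γinv (yseq n + u))
        have hψxpos := hpos (γinv (yseq n))
        rw [div_mul_eq_mul_div, le_div_iff₀ hau]
        nlinarith
      have hconc := unif_key (fun z => Real.log (g z)) ψ hpos
        (Real.measurable_log.comp hg_meas) hG
        (fun n => γinv (yseq n)) (fun n => γinv (yseq n + u)) hx hx'
        (u / a u) (a u) (le_of_lt (div_pos hu hau)) hau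
        (hbundle.mono fun n hn => hn.2.2)
        (hbundle.mono fun n hn => hn.2.1)
        (hbundle.mono fun n hn => by
          have h6 := hψ_mono hn.1
          have h7 := ha_le_one u hu
          have h8 := hpos (γinv (yseq n))
          nlinarith)
      have hexp := (Real.continuous_exp.tendsto 0).comp hconc
      rw [Real.exp_zero] at hexp
      apply hexp.congr
      intro n
      show Real.exp (Real.log (g (γinv (yseq n + u))) - Real.log (g (γinv (yseq n))))
          = g (γinv (yseq n + u)) / g (γinv (yseq n))
      rw [Real.exp_sub, Real.exp_log (hg_pos _), Real.exp_log (hg_pos _)]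
    intro v
    rcases lt_trichotomy v 0 with hv | hv | hv
    · have hu := key (-v) (by linarith)
      have h2 : Tendsto (fun y => g (γinv ((y + v) + -v)) / g (γinv (y + v))) atTop (𝓝 1) :=
        hu.comp (tendsto_atTop_add_const_right atTop v tendsto_id)
      have h3 := h2.inv₀ one_ne_zero
      rw [inv_one] at h3
      apply h3.congr
      intro y
      have h4 : (y + v) + -v = y := by ring
      rw [h4, inv_div]
    · subst hv
      have heq : (fun y => g (γinv (y + 0)) / g (γinv y)) = fun _ => (1:ℝ) := by
        funext y; rw [add_zero, div_self (ne_of_gt (hg_pos _))]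
      rw [heq]; exact tendsto_const_nhds
    · exact key v hv
  · -- backward: composed l.c.f. → ψ-l.c.f.
    intro hH
    have hmono : Monotone (fun y => γinv (max y 0)) := by
      intro y₁ y₂ h
      by_contra hcon
      push_neg at hcon
      have h1 := hinv_right (max y₁ 0) (le_max_right _ _)
      have h2 := hinv_right (max y₂ 0) (le_max_right _ _)
      have h3 := (gamma_diff_bounds' ψ hψ_one hψ_mono (le_of_lt hcon)).1
      rw [h2.1, h1.1] at h3
      have h4 : max y₁ 0 ≤ max y₂ 0 := max_le_max h le_rfl
      have h5 : 0 < (γinv (max y₁ 0) - γinv (max y₂ 0)) / ψ (γinv (max y₁ 0)) :=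
        div_pos (by linarith) (hpos _)
      linarith
    have hGmeas : Measurable (fun y => Real.log (g (γinv (max y 0)))) :=
      Real.measurable_log.comp (hg_meas.comp hmono.measurable)
    have hGlim : ∀ s : ℝ, Tendsto (fun y => Real.log (g (γinv (max (y + s * 1) 0)))
        - Real.log (g (γinv (max y 0)))) atTop (𝓝 0) := by
      intro s
      have h1 : Tendsto (fun y => Real.log (g (γinv (y + s)) / g (γinv y))) atTop
          (𝓝 (Real.log 1)) :=
        (Real.continuousAt_log one_ne_zero).tendsto.comp (hH s)
      rw [Real.log_one] at h1
      have h2 := h1.congr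
        (fun y => Real.log_div (ne_of_gt (hg_pos _)) (ne_of_gt (hg_pos _)))
      apply Tendsto.congr' _ h2
      filter_upwards [eventually_ge_atTop (max 0 (-s))] with y hy
      have hy0 : 0 ≤ y := le_trans (le_max_left _ _) hy
      have hys : 0 ≤ y + s := by
        have := le_trans (le_max_right _ _) hy; linarith
      rw [mul_one, max_eq_left hys, max_eq_left hy0]
    intro v
    rcases eq_or_ne v 0 with hv0 | hv0
    · subst hv0
      have heq : (fun z => g (z + 0 * ψ z) / g z) = fun _ => (1:ℝ) := by
        funext z; rw [zero_mul, add_zero, div_self (ne_of_gt (hg_pos _))]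
      rw [heq]; exact tendsto_const_nhds
    rw [tendsto_iff_seq_tendsto]
    intro zs hzs
    obtain ⟨T, hT, hE⟩ : ∃ T, 0 ≤ T ∧ ∀ᶠ n in atTop, 1 ≤ zs n ∧
        1 ≤ zs n + v * ψ (zs n) ∧
        |(∫ t in (1:ℝ)..(zs n + v * ψ (zs n)), 1 / ψ t)
          - ∫ t in (1:ℝ)..(zs n), 1 / ψ t| ≤ T ∧
        zs n / 2 ≤ zs n + v * ψ (zs n) := by
      rcases (lt_or_gt_of_ne hv0) with hv | hv
      · -- v < 0
        have hu : 0 < -v := by linarith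
        have hau := ha_pos (-v) hu
        refine ⟨(-v) / a (-v), le_of_lt (div_pos hu hau), ?_⟩
        have h0 : (0:ℝ) < 1 / (2 * -v) := by positivity
        have hsm : ∀ᶠ z in (atTop : Filter ℝ), ψ z / z < 1 / (2 * -v) :=
          hψ_small.eventually_lt_const h0
        filter_upwards [hzs.eventually (eventually_ge_atTop 2),
          hzs.eventually hsm, hzs.eventually (hA (-v) hu)] with n hn2 hnsm hnA
        have hψz := hpos (zs n)
        have hzpos : (0:ℝ) < zs n := by linarith
        rw [div_lt_iff₀ hzpos] at hnsm
        have h9 : -v * ψ (zs n) ≤ zs n / 2 := by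
          have hm := mul_lt_mul_of_pos_left hnsm hu
          have heq9 : -v * (1 / (2 * -v) * zs n) = zs n / 2 := by
            field_simp
          linarith
        have hle : zs n + v * ψ (zs n) ≤ zs n := by nlinarith
        have hge1 : 1 ≤ zs n + v * ψ (zs n) := by linarith
        have heqz : zs n - -v * ψ (zs n) = zs n + v * ψ (zs n) := by ring
        rw [heqz] at hnA
        obtain ⟨hdl, hdr⟩ := gamma_diff_bounds' ψ hψ_one hψ_mono hle
        have h7 : zs n - (zs n + v * ψ (zs n)) = -v * ψ (zs n) := by ring
        rw [h7] at hdl hdr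
        have hψ'pos := hpos (zs n + v * ψ (zs n))
        have h10 : 0 ≤ -v * ψ (zs n) / ψ (zs n) := div_nonneg (by nlinarith) (le_of_lt hψz)
        refine ⟨by linarith, hge1, ?_, by linarith⟩
        rw [abs_sub_comm, abs_of_nonneg (by linarith)]
        have h11 : -v * ψ (zs n) / ψ (zs n + v * ψ (zs n)) ≤ -v / a (-v) := by
          rw [div_le_div_iff₀ hψ'pos hau]
          nlinarith
        linarith
      · -- v > 0
        refine ⟨v, le_of_lt hv, ?_⟩
        filter_upwards [hzs.eventually (eventually_ge_atTop 1)] with n hn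
        have hψz := hpos (zs n)
        have hle : zs n ≤ zs n + v * ψ (zs n) := by nlinarith
        obtain ⟨hdl, hdr⟩ := gamma_diff_bounds' ψ hψ_one hψ_mono hle
        have h7 : zs n + v * ψ (zs n) - zs n = v * ψ (zs n) := by ring
        rw [h7] at hdl hdr
        have h8 : v * ψ (zs n) / ψ (zs n) = v := by field_simp
        rw [h8] at hdr
        have h9 : 0 ≤ v * ψ (zs n) / ψ (zs n + v * ψ (zs n)) :=
          div_nonneg (by nlinarith) (le_of_lt (hpos _))
        refine ⟨hn, by nlinarith, ?_, by nlinarith⟩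
        rw [abs_of_nonneg (by linarith)]
        linarith
    have hzs' : Tendsto (fun n => zs n + v * ψ (zs n)) atTop atTop :=
      tendsto_atTop_mono' atTop (hE.mono fun n hn => hn.2.2.2)
        (hzs.atTop_div_const two_pos)
    have hx : Tendsto (fun n => ∫ t in (1:ℝ)..(zs n), 1 / ψ t) atTop atTop :=
      hγ_tendsto.comp hzs
    have hx' : Tendsto (fun n => ∫ t in (1:ℝ)..(zs n + v * ψ (zs n)), 1 / ψ t) atTop atTop :=
      hγ_tendsto.comp hzs'
    have hconc := unif_key (fun y => Real.log (g (γinv (max y 0)))) (fun _ => (1:ℝ))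
      (fun _ => one_pos) hGmeas hGlim
      (fun n => ∫ t in (1:ℝ)..(zs n), 1 / ψ t)
      (fun n => ∫ t in (1:ℝ)..(zs n + v * ψ (zs n)), 1 / ψ t)
      hx hx' T 1 hT one_pos
      (hE.mono fun n hn => by
        simpa only [mul_one] using hn.2.2.1)
      (Eventually.of_forall fun n => by norm_num)
      (Eventually.of_forall fun n => by norm_num)
    have hexp := (Real.continuous_exp.tendsto 0).comp hconc
    rw [Real.exp_zero] at hexp
    apply Tendsto.congr' _ hexp
    filter_upwards [hE] with n hn
    simp only [Function.comp_apply]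
    rw [max_eq_left (hγ_nonneg _ hn.2.1), max_eq_left (hγ_nonneg _ hn.1),
      hinv_left _ hn.2.1, hinv_left _ hn.1, Real.exp_sub, Real.exp_log (hg_pos _),
      Real.exp_log (hg_pos _)]
end
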